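/- arXiv:2004.10070 — 4 statements merged into one kernel-verified Lean document; each statement's English description precedes it below -/
import Mathlib

section
/- Let V be a 4-dimensional complex vector space, Ω a nonzero element of ⋀⁴V, and σ ∈ ⋀²V non-decomposable, so that B_σ is a nondegenerate alternating form on V. For a 2-dimensional subspace Λ ⊆ V let Λ^∠ := {w ∈ V : B_σ(w,v) = 0 for all v ∈ Λ}. Then for any two distinct 2-dimensional subspaces Λ, Λ' of V, π_σ(Λ) = π_σ(Λ') if and only if Λ' = Λ^∠. -/
set_option maxHeartbeats 1600000

open ExteriorAlgebra

/-- `u` is a Plücker vector of the `m`-dimensional subspace `Λ`: it is the wedge of a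
spanning family of `Λ`. -/
def IsPluckerVector {V : Type*} [AddCommGroup V] [Module ℂ V] (m : ℕ)
    (Λ : Submodule ℂ V) (u : ExteriorAlgebra ℂ V) : Prop :=
  ∃ v : Fin m → V, Submodule.span ℂ (Set.range v) = Λ ∧ u = ιMulti ℂ m v

/-- The images of `u` and `u'` in the quotient `(⋀V)/Z` span the same line; this expresses
`π_Z(Λ) = π_Z(Λ')` for subspaces with Plücker vectors `u` and `u'`. -/
def ProjEq {V : Type*} [AddCommGroup V] [Module ℂ V] (Z : Submodule ℂ (ExteriorAlgebra ℂ V))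
    (u u' : ExteriorAlgebra ℂ V) : Prop :=
  Submodule.span ℂ {Z.mkQ u} = Submodule.span ℂ {Z.mkQ u'}

section Aux

set_option linter.unusedSectionVars false

variable {V : Type*} [AddCommGroup V] [Module ℂ V]

lemma iota_swap (x y : V) : ι ℂ x * ι ℂ y = -(ι ℂ y * ι ℂ x) := by
  rw [eq_neg_iff_add_eq_zero]; exact ι_add_mul_swap x y

lemma iota_cons (x : V) {n : ℕ} (v : Fin n → V) :
    ι ℂ x * ιMulti ℂ n v = ιMulti ℂ (n+1) (Fin.cons x v) := by
  rw [ιMulti_succ_apply]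
  have h : Fin.cons x v ∘ Fin.succ = v := by
    funext i; simp
  simp only [Matrix.vecTail, h, Fin.cons_zero]

lemma iMulti_two (v : Fin 2 → V) : ιMulti ℂ 2 v = ι ℂ (v 0) * ι ℂ (v 1) := by
  rw [ιMulti_apply]
  simp [List.ofFn_succ]

lemma quad_eq (w x y z : V) :
    ι ℂ w * ι ℂ x * (ι ℂ y * ι ℂ z) = ιMulti ℂ 4 ![w, x, y, z] := by
  have h2 : ιMulti ℂ 2 ![y, z] = ι ℂ y * ι ℂ z := by
    rw [iMulti_two]; simp
  have h3 : Fin.cons w (Fin.cons x ![y, z]) = ![w, x, y, z] := by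
    funext i; fin_cases i <;> rfl
  rw [← h2, mul_assoc, iota_cons, iota_cons, h3]

lemma quad_zero {w x y z : V}
    (h : w = x ∨ w = y ∨ w = z ∨ x = y ∨ x = z ∨ y = z) :
    ι ℂ w * ι ℂ x * (ι ℂ y * ι ℂ z) = 0 := by
  rw [quad_eq]
  rcases h with h | h | h | h | h | h
  · exact AlternatingMap.map_eq_zero_of_eq _ _ (i := 0) (j := 1) (by simpa using h) (by decide)
  · exact AlternatingMap.map_eq_zero_of_eq _ _ (i := 0) (j := 2) (by simpa using h) (by decide)
  · exact AlternatingMap.map_eq_zero_of_eq _ _ (i := 0) (j := 3) (by simpa using h) (by decide)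
  · exact AlternatingMap.map_eq_zero_of_eq _ _ (i := 1) (j := 2) (by simpa using h) (by decide)
  · exact AlternatingMap.map_eq_zero_of_eq _ _ (i := 1) (j := 3) (by simpa using h) (by decide)
  · exact AlternatingMap.map_eq_zero_of_eq _ _ (i := 2) (j := 3) (by simpa using h) (by decide)

lemma quad_perm (x : Fin 4 → V) (g : Equiv.Perm (Fin 4)) :
    ι ℂ (x (g 0)) * ι ℂ (x (g 1)) * (ι ℂ (x (g 2)) * ι ℂ (x (g 3)))
      = Equiv.Perm.sign g • (ι ℂ (x 0) * ι ℂ (x 1) * (ι ℂ (x 2) * ι ℂ (x 3))) := by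
  rw [quad_eq, quad_eq]
  have h : ![x (g 0), x (g 1), x (g 2), x (g 3)] = x ∘ g := by
    funext i; fin_cases i <;> rfl
  rw [h]
  exact AlternatingMap.map_perm _ x g

variable [FiniteDimensional ℂ V]

lemma A4 (hV : Module.finrank ℂ V = 4) (b : Fin 4 → V) (hb : LinearIndependent ℂ b) :
    ιMulti ℂ 4 b ≠ 0 := by
  have hcard : Fintype.card (Fin 4) = Module.finrank ℂ V := by simp [hV]
  let b' : Module.Basis (Fin 4) ℂ V := basisOfLinearIndependentOfCardEqFinrank hb hcard
  have hb' : ⇑b' = b := coe_basisOfLinearIndependentOfCardEqFinrank hb hcard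
  let f : ∀ i : ℕ, V [⋀^Fin i]→ₗ[ℂ] ℂ :=
    Function.update (fun i => (0 : V [⋀^Fin i]→ₗ[ℂ] ℂ)) 4 b'.det
  have hf4 : f 4 = b'.det := Function.update_self _ _ _
  have h1 : liftAlternating (R := ℂ) f (ιMulti ℂ 4 b) = 1 := by
    rw [liftAlternating_apply_ιMulti, hf4, ← hb']
    exact b'.det_self
  intro h
  rw [h, map_zero] at h1
  exact one_ne_zero h1.symm

lemma Aextend (hV : Module.finrank ℂ V = 4) {m : ℕ} (hm : m < 4) (v : Fin m → V)
    (hv : LinearIndependent ℂ v) :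
    ∃ x : V, LinearIndependent ℂ (Fin.cons x v : Fin (m+1) → V) := by
  have hne : Submodule.span ℂ (Set.range v) ≠ ⊤ := by
    intro h
    have h1 : Module.finrank ℂ (Submodule.span ℂ (Set.range v)) = 4 := by
      rw [h, finrank_top, hV]
    have h2 : Module.finrank ℂ (Submodule.span ℂ (Set.range v)) = m :=
      (finrank_span_eq_card hv).trans (by simp)
    omega
  obtain ⟨x, hx⟩ : ∃ x, x ∉ Submodule.span ℂ (Set.range v) := by
    by_contra h
    push_neg at h
    exact hne (Submodule.eq_top_iff'.2 h)
  exact ⟨x, (linearIndependent_fin_cons.2 ⟨hv, hx⟩)⟩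

lemma Agen (hV : Module.finrank ℂ V = 4) {m : ℕ} (hm : m ≤ 4) (v : Fin m → V)
    (hv : LinearIndependent ℂ v) : ιMulti ℂ m v ≠ 0 := by
  obtain ⟨k, hk⟩ : ∃ k, 4 - m = k := ⟨4 - m, rfl⟩
  induction k generalizing m v with
  | zero =>
      have : m = 4 := by omega
      subst this
      exact A4 hV v hv
  | succ k ih =>
      obtain ⟨x, hx⟩ := Aextend hV (by omega) v hv
      have h := ih (by omega) _ hx (by omega)
      rw [← iota_cons] at h
      intro h0
      rw [h0, mul_zero] at h
      exact h rfl

lemma wedge_eq_zero_iff (hV : Module.finrank ℂ V = 4) {m : ℕ} (hm : m + 1 ≤ 4)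
    (v : Fin m → V) (hv : LinearIndependent ℂ v) (w : V) :
    ι ℂ w * ιMulti ℂ m v = 0 ↔ w ∈ Submodule.span ℂ (Set.range v) := by
  rw [iota_cons]
  constructor
  · intro h
    by_contra hw
    exact Agen hV hm _ (linearIndependent_fin_cons.2 ⟨hv, hw⟩) h
  · intro h
    apply AlternatingMap.map_linearDependent
    rw [linearIndependent_fin_cons]
    tauto

/-- If `e` is a nonzero element of the span of `v 0, v 1`, the wedge `v0 ∧ v1` can be
written as `e ∧ g`. -/
lemma D2 (v : Fin 2 → V) (e : V) (he : e ∈ Submodule.span ℂ (Set.range v))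
    (he0 : e ≠ 0) : ∃ g : V, ιMulti ℂ 2 v = ι ℂ e * ι ℂ g := by
  rw [Submodule.mem_span_range_iff_exists_fun] at he
  obtain ⟨a, ha⟩ := he
  rw [Fin.sum_univ_two] at ha
  rw [iMulti_two]
  by_cases h0 : a 0 = 0
  · have h1 : a 1 ≠ 0 := by
      intro h1; apply he0; rw [← ha, h0, h1, zero_smul, zero_smul, add_zero]
    refine ⟨-(a 1)⁻¹ • v 0, ?_⟩
    rw [← ha, h0, zero_smul, zero_add]
    rw [map_smul, map_smul, smul_mul_assoc, mul_smul_comm, smul_smul, iota_swap (v 1) (v 0)]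
    rw [smul_neg, mul_neg, mul_inv_cancel₀ h1]
    simp
  · refine ⟨(a 0)⁻¹ • v 1, ?_⟩
    rw [← ha]
    simp only [map_add, map_smul, add_mul, smul_mul_assoc, mul_smul_comm, smul_smul,
      ι_sq_zero, smul_zero, add_zero, inv_mul_cancel₀ h0, one_smul]

lemma EXP {m : ℕ} (e : Fin 4 → V) (hspan : Submodule.span ℂ (Set.range e) = ⊤)
    (w : Fin m → V) :
    ιMulti ℂ m w ∈ Submodule.span ℂ
      (Set.range fun p : Fin m → Fin 4 => ιMulti ℂ m (e ∘ p)) := by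
  have hw : ∀ i, ∃ a : Fin 4 → ℂ, ∑ j, a j • e j = w i := by
    intro i
    rw [← Submodule.mem_span_range_iff_exists_fun]
    rw [hspan]; trivial
  choose a ha using hw
  have hw' : w = fun i => ∑ j, a i j • e j := by funext i; exact (ha i).symm
  rw [hw']
  have hms := MultilinearMap.map_sum (ιMulti ℂ m (M := V)).toMultilinearMap
    (α := fun _ => Fin 4) (g := fun i j => a i j • e j)
  have h : ιMulti ℂ m (fun i => ∑ j, a i j • e j)
      = ∑ p : Fin m → Fin 4, (∏ i, a i (p i)) • ιMulti ℂ m (e ∘ p) := by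
    rw [show (ιMulti ℂ m (fun i => ∑ j, a i j • e j))
        = (ιMulti ℂ m).toMultilinearMap (fun i => ∑ j, a i j • e j) from rfl, hms]
    refine Finset.sum_congr rfl fun p _ => ?_
    have := MultilinearMap.map_smul_univ (ιMulti ℂ m (M := V)).toMultilinearMap
      (fun i => a i (p i)) (fun i => e (p i))
    simpa [Function.comp_def] using this
  rw [h]
  exact Submodule.sum_mem _ fun p _ =>
    Submodule.smul_mem _ _ (Submodule.subset_span ⟨p, rfl⟩)

lemma sum_two {M : Type*} [AddCommMonoid M] {ι : Type*} [Fintype ι] [DecidableEq ι]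
    (f : ι → M) (a b : ι) (hab : a ≠ b) (h : ∀ c, c ≠ a → c ≠ b → f c = 0) :
    ∑ c, f c = f a + f b := by
  rw [← Finset.sum_pair hab]
  symm
  apply Finset.sum_subset (Finset.subset_univ _)
  intro x _ hx
  simp only [Finset.mem_insert, Finset.mem_singleton, not_or] at hx
  exact h x hx.1 hx.2

lemma projEq_iff (σ u u' : ExteriorAlgebra ℂ V)
    (hu : ∀ t : ℂ, u ≠ t • σ) (hu' : ∀ t : ℂ, u' ≠ t • σ) :
    ProjEq (Submodule.span ℂ {σ}) u u' ↔
    ∃ c d : ℂ, c ≠ 0 ∧ u' = c • u + d • σ := by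
  unfold ProjEq
  set Z := Submodule.span ℂ {σ} with hZ
  have hmk : ∀ x : ExteriorAlgebra ℂ V, Z.mkQ x = 0 ↔ ∃ t : ℂ, t • σ = x := by
    intro x
    rw [Submodule.mkQ_apply, Submodule.Quotient.mk_eq_zero, hZ, Submodule.mem_span_singleton]
  have hmku : Z.mkQ u ≠ 0 := by
    simp only [ne_eq, hmk, not_exists]; intro t ht; exact hu t ht.symm
  have hmku' : Z.mkQ u' ≠ 0 := by
    simp only [ne_eq, hmk, not_exists]; intro t ht; exact hu' t ht.symm
  constructor
  · intro h
    have h1 : Z.mkQ u' ∈ Submodule.span ℂ {Z.mkQ u} := by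
      rw [h]; exact Submodule.mem_span_singleton_self _
    rw [Submodule.mem_span_singleton] at h1
    obtain ⟨c, hc⟩ := h1
    have hc0 : c ≠ 0 := by
      rintro rfl; rw [zero_smul] at hc; exact hmku' hc.symm
    have h2 : Z.mkQ (u' - c • u) = 0 := by
      rw [map_sub, map_smul, hc, sub_self]
    rw [hmk] at h2
    obtain ⟨d, hd⟩ := h2
    exact ⟨c, d, hc0, by rw [hd]; abel⟩
  · rintro ⟨c, d, hc0, rfl⟩
    have h : Z.mkQ (c • u + d • σ) = c • Z.mkQ u := by
      rw [map_add, map_smul, map_smul, (hmk σ).2 ⟨1, one_smul _ _⟩, smul_zero, add_zero]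
    rw [h, Submodule.span_singleton_smul_eq (IsUnit.mk0 c hc0)]

end Aux

/-- For a 4-dimensional complex `V`, nonzero `Ω ∈ ⋀⁴V`, non-decomposable
`σ ∈ ⋀²V`, and `B` the induced nondegenerate alternating form on `V`, two distinct
2-dimensional subspaces `Λ, Λ'` satisfy `π_σ(Λ) = π_σ(Λ')` iff `Λ'` is the
skew-orthogonal complement of `Λ` with respect to `B`. -/
theorem stmt1 {V : Type*} [AddCommGroup V] [Module ℂ V] [FiniteDimensional ℂ V]
    (hV : Module.finrank ℂ V = 4)
    (Ω : ExteriorAlgebra ℂ V) (hΩmem : Ω ∈ ⋀[ℂ]^4 V) (hΩ : Ω ≠ 0)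
    (σ : ExteriorAlgebra ℂ V) (hσmem : σ ∈ ⋀[ℂ]^2 V)
    (hσ : ¬ ∃ v w : V, σ = ι ℂ v * ι ℂ w)
    (B : V →ₗ[ℂ] V →ₗ[ℂ] ℂ)
    (hB : ∀ v w : V, ι ℂ v * ι ℂ w * σ = B v w • Ω)
    (Λ Λ' : Submodule ℂ V)
    (hΛ : Module.finrank ℂ Λ = 2) (hΛ' : Module.finrank ℂ Λ' = 2)
    (hne : Λ ≠ Λ')
    (u u' : ExteriorAlgebra ℂ V)
    (hu : IsPluckerVector 2 Λ u) (hu' : IsPluckerVector 2 Λ' u') :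
    ProjEq (Submodule.span ℂ {σ}) u u' ↔
      (∀ w : V, w ∈ Λ' ↔ ∀ v ∈ Λ, B w v = 0) := by
  obtain ⟨v, hvspan, hueq⟩ := hu
  obtain ⟨v', hv'span, hu'eq⟩ := hu'
  have hvind : LinearIndependent ℂ v := by
    rw [linearIndependent_iff_card_eq_finrank_span]
    rw [Set.finrank, hvspan, hΛ]
    simp
  have hv'ind : LinearIndependent ℂ v' := by
    rw [linearIndependent_iff_card_eq_finrank_span]
    rw [Set.finrank, hv'span, hΛ']
    simp
  have hu0 : u ≠ 0 := by rw [hueq]; exact Agen hV (by norm_num) v hvind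
  have hu'0 : u' ≠ 0 := by rw [hu'eq]; exact Agen hV (by norm_num) v' hv'ind
  have hund : ∀ t : ℂ, u ≠ t • σ := by
    intro t h
    rcases eq_or_ne t 0 with rfl | ht
    · rw [zero_smul] at h; exact hu0 h
    · apply hσ
      refine ⟨t⁻¹ • v 0, v 1, ?_⟩
      rw [map_smul, smul_mul_assoc, ← iMulti_two, ← hueq, h, smul_smul, inv_mul_cancel₀ ht,
        one_smul]
  have hu'nd : ∀ t : ℂ, u' ≠ t • σ := by
    intro t h
    rcases eq_or_ne t 0 with rfl | ht
    · rw [zero_smul] at h; exact hu'0 h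
    · apply hσ
      refine ⟨t⁻¹ • v' 0, v' 1, ?_⟩
      rw [map_smul, smul_mul_assoc, ← iMulti_two, ← hu'eq, h, smul_smul, inv_mul_cancel₀ ht,
        one_smul]
  have hwu : ∀ w : V, ι ℂ w * u = 0 ↔ w ∈ Λ := by
    intro w
    rw [hueq, wedge_eq_zero_iff hV (by norm_num) v hvind, hvspan]
  have hwu' : ∀ w : V, ι ℂ w * u' = 0 ↔ w ∈ Λ' := by
    intro w
    rw [hu'eq, wedge_eq_zero_iff hV (by norm_num) v' hv'ind, hv'span]
  have hvmem : ∀ i, v i ∈ Λ := fun i => hvspan ▸ Submodule.subset_span ⟨i, rfl⟩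
  have hv'mem : ∀ i, v' i ∈ Λ' := fun i => hv'span ▸ Submodule.subset_span ⟨i, rfl⟩
  rw [projEq_iff σ u u' hund hu'nd]
  constructor
  · -- forward direction
    rintro ⟨c, d, hc0, hcd⟩
    have hd0 : d ≠ 0 := by
      rintro rfl
      rw [zero_smul, add_zero] at hcd
      apply hne
      ext w
      rw [← hwu w, ← hwu' w, hcd, mul_smul_comm, smul_eq_zero]
      simp [hc0]
    have hσeq : σ = d⁻¹ • (u' - c • u) := by
      rw [hcd]
      rw [add_sub_cancel_left, smul_smul, inv_mul_cancel₀ hd0, one_smul]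
    intro w
    constructor
    · intro hw x hx
      have h1 : ι ℂ w * u' = 0 := (hwu' w).2 hw
      have h2 : ι ℂ x * u = 0 := (hwu x).2 hx
      have key : B w x • Ω = 0 := by
        rw [← hB w x, hσeq, mul_smul_comm, mul_sub, mul_smul_comm,
          mul_assoc _ _ u, h2, mul_zero, smul_zero, sub_zero,
          iota_swap w x, neg_mul, mul_assoc, h1, mul_zero, neg_zero, smul_zero]
      rcases smul_eq_zero.1 key with h | h
      · exact h
      · exact absurd h hΩ
    · intro hbv
      by_contra hw
      have hwnot : w ∉ Submodule.span ℂ (Set.range v') := by rw [hv'span]; exact hw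
      have hconsind : LinearIndependent ℂ (Fin.cons w v' : Fin 3 → V) :=
        linearIndependent_fin_cons.2 ⟨hv'ind, hwnot⟩
      have hstep : ∀ x ∈ Λ, x ∈ Submodule.span ℂ (Set.range (Fin.cons w v' : Fin 3 → V)) := by
        intro x hx
        have hBwx : B w x = 0 := hbv x hx
        have k1 : ι ℂ w * ι ℂ x * σ = 0 := by rw [hB, hBwx, zero_smul]
        have k2 : ι ℂ w * ι ℂ x * u = 0 := by
          rw [mul_assoc, (hwu x).2 hx, mul_zero]
        have k3 : ι ℂ w * ι ℂ x * u' = 0 := by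
          rw [hσeq, mul_smul_comm, mul_sub, mul_smul_comm, k2, smul_zero, sub_zero,
            smul_eq_zero] at k1
          rcases k1 with h | h
          · exact absurd h (inv_ne_zero hd0)
          · exact h
        have k4 : ι ℂ x * ιMulti ℂ 3 (Fin.cons w v') = 0 := by
          rw [← iota_cons, ← hu'eq, ← mul_assoc, iota_swap x w, neg_mul, k3, neg_zero]
        exact (wedge_eq_zero_iff hV (by norm_num) _ hconsind x).1 k4
      have hΛW : Λ ≤ Submodule.span ℂ (Set.range (Fin.cons w v' : Fin 3 → V)) :=
        fun x hx => hstep x hx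
      have hΛ'W : Λ' ≤ Submodule.span ℂ (Set.range (Fin.cons w v' : Fin 3 → V)) := by
        rw [← hv'span]
        apply Submodule.span_mono
        rintro - ⟨i, rfl⟩
        exact ⟨i.succ, by simp⟩
      have hWrank : Module.finrank ℂ
          (Submodule.span ℂ (Set.range (Fin.cons w v' : Fin 3 → V))) = 3 :=
        (finrank_span_eq_card hconsind).trans (by simp)
      have hsup3 : Module.finrank ℂ ↥(Λ ⊔ Λ') ≤ 3 := by
        rw [← hWrank]
        exact Submodule.finrank_mono (sup_le hΛW hΛ'W)
      have hinfpos : Λ ⊓ Λ' ≠ ⊥ := by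
        intro hbot
        have := Submodule.finrank_sup_add_finrank_inf_eq Λ Λ'
        rw [hbot, hΛ, hΛ'] at this
        simp only [finrank_bot, add_zero] at this
        omega
      obtain ⟨e, he, he0⟩ := Submodule.ne_bot_iff _ |>.1 hinfpos
      obtain ⟨g, hg⟩ := D2 v e (by rw [hvspan]; exact he.1) he0
      obtain ⟨g', hg'⟩ := D2 v' e (by rw [hv'span]; exact he.2) he0
      apply hσ
      refine ⟨d⁻¹ • e, g' - c • g, ?_⟩
      have : d • σ = ι ℂ e * ι ℂ (g' - c • g) := by
        have hdσ : d • σ = u' - c • u := by rw [hcd]; abel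
        rw [hdσ, hueq, hu'eq, hg, hg', map_sub, map_smul, mul_sub, mul_smul_comm]
      rw [map_smul, smul_mul_assoc, ← this, smul_smul, inv_mul_cancel₀ hd0, one_smul]
  · -- backward direction
    intro hperp
    have hBalt : ∀ x : V, B x x = 0 := by
      intro x
      have h := hB x x
      rw [ι_sq_zero, zero_mul] at h
      rcases smul_eq_zero.1 h.symm with h' | h'
      · exact h'
      · exact absurd h' hΩ
    have hBskew : ∀ x y : V, B x y = - B y x := by
      intro x y
      have h := hBalt (x + y)
      simp only [map_add, LinearMap.add_apply] at h
      rw [hBalt x, hBalt y] at h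
      have h2 : B x y + B y x = 0 := by linear_combination h
      linear_combination h2
    have hinf : Λ ⊓ Λ' = ⊥ := by
      by_contra h
      obtain ⟨e, he, he0⟩ := (Submodule.ne_bot_iff _).1 h
      have hBe : ∀ x ∈ Λ, B e x = 0 := (hperp e).1 he.2
      have he1 : e ∈ Submodule.span ℂ (Set.range v) := by rw [hvspan]; exact he.1
      rw [Submodule.mem_span_range_iff_exists_fun] at he1
      obtain ⟨a, ha⟩ := he1
      rw [Fin.sum_univ_two] at ha
      have h01 : B (v 0) (v 1) = 0 := by
        have hB1 := hBe (v 1) (hvmem 1)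
        have hB0 := hBe (v 0) (hvmem 0)
        rw [← ha] at hB0 hB1
        simp only [map_add, map_smul, LinearMap.add_apply, LinearMap.smul_apply,
          smul_eq_mul, hBalt, mul_zero, add_zero, zero_add] at hB0 hB1
        by_cases h0 : a 0 = 0
        · have h1 : a 1 ≠ 0 := by
            intro h1; apply he0; rw [← ha, h0, h1, zero_smul, zero_smul, add_zero]
          rw [hBskew]
          have := (mul_eq_zero.1 hB0).resolve_left h1
          rw [this, neg_zero]
        · exact (mul_eq_zero.1 hB1).resolve_left h0
      have h10 : B (v 1) (v 0) = 0 := by rw [hBskew, h01, neg_zero]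
      apply hne
      apply Submodule.eq_of_le_of_finrank_le ?_ (by rw [hΛ, hΛ'])
      intro y hy
      rw [hperp y]
      intro x hx
      have hy1 : y ∈ Submodule.span ℂ (Set.range v) := by rw [hvspan]; exact hy
      have hx1 : x ∈ Submodule.span ℂ (Set.range v) := by rw [hvspan]; exact hx
      rw [Submodule.mem_span_range_iff_exists_fun] at hy1 hx1
      obtain ⟨b, hb⟩ := hy1
      obtain ⟨c, hc⟩ := hx1
      rw [Fin.sum_univ_two] at hb hc
      rw [← hb, ← hc]
      simp only [map_add, map_smul, LinearMap.add_apply, LinearMap.smul_apply,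
        smul_eq_mul, hBalt, h01, h10, mul_zero, add_zero]
    have hsupT : Λ ⊔ Λ' = ⊤ := by
      apply Submodule.eq_top_of_finrank_eq
      have h := Submodule.finrank_sup_add_finrank_inf_eq Λ Λ'
      rw [hinf, hΛ, hΛ'] at h
      simp only [finrank_bot, add_zero] at h
      rw [h, hV]
    set e4 : Fin 4 → V := ![v 0, v 1, v' 0, v' 1] with he4
    have hspan4 : Submodule.span ℂ (Set.range e4) = ⊤ := by
      rw [eq_top_iff, ← hsupT]
      apply sup_le
      · rw [← hvspan]
        apply Submodule.span_mono
        rintro - ⟨i, rfl⟩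
        fin_cases i
        · exact ⟨0, rfl⟩
        · exact ⟨1, rfl⟩
      · rw [← hv'span]
        apply Submodule.span_mono
        rintro - ⟨i, rfl⟩
        fin_cases i
        · exact ⟨2, rfl⟩
        · exact ⟨3, rfl⟩
    have hind4 : LinearIndependent ℂ e4 :=
      linearIndependent_of_top_le_span_of_card_eq_finrank (by rw [hspan4]) (by simp [hV])
    set W0 : ExteriorAlgebra ℂ V := ι ℂ (e4 0) * ι ℂ (e4 1) * (ι ℂ (e4 2) * ι ℂ (e4 3))
      with hW0
    have hW0eq : W0 = ιMulti ℂ 4 e4 := by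
      have h4 : (![e4 0, e4 1, e4 2, e4 3] : Fin 4 → V) = e4 := by
        funext i; fin_cases i <;> rfl
      rw [hW0, quad_eq, h4]
    have hW00 : W0 ≠ 0 := by rw [hW0eq]; exact A4 hV e4 hind4
    have cancel : ∀ a b : ℂ, a • W0 + b • (-W0) = 0 → a = b := by
      intro a b h0
      have hsub : (a - b) • W0 = 0 := by
        rw [sub_smul, sub_eq_add_neg, ← smul_neg]
        exact h0
      rcases smul_eq_zero.1 hsub with h' | h'
      · exact sub_eq_zero.1 h'
      · exact absurd h' hW00
    have cancel' : ∀ a b : ℂ, a • (-W0) + b • W0 = 0 → a = b := by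
      intro a b h0
      have := cancel b a (by rw [add_comm]; exact h0)
      exact this.symm
    have hσc : ∃ cc : (Fin 2 → Fin 4) → ℂ,
        ∑ p : Fin 2 → Fin 4, cc p • ιMulti ℂ 2 (e4 ∘ p) = σ := by
      rw [← Submodule.mem_span_range_iff_exists_fun]
      have h1 : σ ∈ Submodule.span ℂ (Set.range (ιMulti ℂ 2 (M := V))) := by
        rw [ιMulti_span_fixedDegree]; exact hσmem
      refine Submodule.span_le.2 ?_ h1
      rintro - ⟨w, rfl⟩
      exact EXP e4 hspan4 w
    obtain ⟨cc, hcc⟩ := hσc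
    have hσsum : σ = ∑ p : Fin 2 → Fin 4, cc p • (ι ℂ (e4 (p 0)) * ι ℂ (e4 (p 1))) := by
      rw [← hcc]
      refine Finset.sum_congr rfl fun p _ => ?_
      rw [iMulti_two]
      rfl
    -- the four mixed-coefficient identities
    have key20 : cc ![1,3] = cc ![3,1] := by
      have hB20 : B (e4 2) (e4 0) = 0 := (hperp (e4 2)).1 (hv'mem 0) (e4 0) (hvmem 0)
      have h0 : ι ℂ (e4 2) * ι ℂ (e4 0) * σ = 0 := by rw [hB, hB20, zero_smul]
      rw [hσsum, Finset.mul_sum] at h0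
      simp only [mul_smul_comm] at h0
      rw [sum_two (fun p : Fin 2 → Fin 4 =>
            cc p • (ι ℂ (e4 2) * ι ℂ (e4 0) * (ι ℂ (e4 (p 0)) * ι ℂ (e4 (p 1)))))
          ![1,3] ![3,1] (by decide) ?_] at h0
      swap
      · intro p h1 h2
        have hidx : p 0 = 2 ∨ p 0 = 0 ∨ p 1 = 2 ∨ p 1 = 0 ∨ p 0 = p 1 := by
          have hd : ∀ q : Fin 2 → Fin 4, q ≠ ![1,3] → q ≠ ![3,1] →
              (q 0 = 2 ∨ q 0 = 0 ∨ q 1 = 2 ∨ q 1 = 0 ∨ q 0 = q 1) := by decide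
          exact hd p h1 h2
        have hq : ι ℂ (e4 2) * ι ℂ (e4 0) * (ι ℂ (e4 (p 0)) * ι ℂ (e4 (p 1))) = 0 := by
          rcases hidx with h' | h' | h' | h' | h'
          · exact quad_zero (Or.inr (Or.inl (congrArg e4 h').symm))
          · exact quad_zero (Or.inr (Or.inr (Or.inr (Or.inl (congrArg e4 h').symm))))
          · exact quad_zero (Or.inr (Or.inr (Or.inl (congrArg e4 h').symm)))
          · exact quad_zero (Or.inr (Or.inr (Or.inr (Or.inr (Or.inl (congrArg e4 h').symm)))))
          · exact quad_zero (Or.inr (Or.inr (Or.inr (Or.inr (Or.inr (congrArg e4 h'))))))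
        simp only [hq, smul_zero]
      simp only [Matrix.cons_val_zero, Matrix.cons_val_one, Matrix.head_cons] at h0
      have hT1 : ι ℂ (e4 2) * ι ℂ (e4 0) * (ι ℂ (e4 1) * ι ℂ (e4 3)) = W0 := by
        have hgp := quad_perm e4
          (⟨![2,0,1,3], ![1,2,0,3], by decide, by decide⟩ : Equiv.Perm (Fin 4))
        have hsg : Equiv.Perm.sign
            (⟨![2,0,1,3], ![1,2,0,3], by decide, by decide⟩ : Equiv.Perm (Fin 4)) = 1 := by
          decide
        rw [hsg, one_smul] at hgp
        exact hgp
      have hT2 : ι ℂ (e4 2) * ι ℂ (e4 0) * (ι ℂ (e4 3) * ι ℂ (e4 1)) = -W0 := by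
        have hgp := quad_perm e4
          (⟨![2,0,3,1], ![1,3,0,2], by decide, by decide⟩ : Equiv.Perm (Fin 4))
        have hsg : Equiv.Perm.sign
            (⟨![2,0,3,1], ![1,3,0,2], by decide, by decide⟩ : Equiv.Perm (Fin 4)) = -1 := by
          decide
        rw [hsg, Units.neg_smul, one_smul] at hgp
        exact hgp
      rw [hT1, hT2] at h0
      exact cancel _ _ h0
    have key21 : cc ![0,3] = cc ![3,0] := by
      have hBij : B (e4 2) (e4 1) = 0 := (hperp (e4 2)).1 (hv'mem 0) (e4 1) (hvmem 1)
      have h0 : ι ℂ (e4 2) * ι ℂ (e4 1) * σ = 0 := by rw [hB, hBij, zero_smul]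
      rw [hσsum, Finset.mul_sum] at h0
      simp only [mul_smul_comm] at h0
      rw [sum_two (fun p : Fin 2 → Fin 4 =>
            cc p • (ι ℂ (e4 2) * ι ℂ (e4 1) * (ι ℂ (e4 (p 0)) * ι ℂ (e4 (p 1)))))
          ![0,3] ![3,0] (by decide) ?_] at h0
      swap
      · intro p h1 h2
        have hidx : p 0 = 2 ∨ p 0 = 1 ∨ p 1 = 2 ∨ p 1 = 1 ∨ p 0 = p 1 := by
          have hd : ∀ q : Fin 2 → Fin 4, q ≠ ![0,3] → q ≠ ![3,0] →
              (q 0 = 2 ∨ q 0 = 1 ∨ q 1 = 2 ∨ q 1 = 1 ∨ q 0 = q 1) := by decide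
          exact hd p h1 h2
        have hq : ι ℂ (e4 2) * ι ℂ (e4 1) * (ι ℂ (e4 (p 0)) * ι ℂ (e4 (p 1))) = 0 := by
          rcases hidx with h' | h' | h' | h' | h'
          · exact quad_zero (Or.inr (Or.inl (congrArg e4 h').symm))
          · exact quad_zero (Or.inr (Or.inr (Or.inr (Or.inl (congrArg e4 h').symm))))
          · exact quad_zero (Or.inr (Or.inr (Or.inl (congrArg e4 h').symm)))
          · exact quad_zero (Or.inr (Or.inr (Or.inr (Or.inr (Or.inl (congrArg e4 h').symm)))))
          · exact quad_zero (Or.inr (Or.inr (Or.inr (Or.inr (Or.inr (congrArg e4 h'))))))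
        simp only [hq, smul_zero]
      simp only [Matrix.cons_val_zero, Matrix.cons_val_one, Matrix.head_cons] at h0
      have hT1 : ι ℂ (e4 2) * ι ℂ (e4 1) * (ι ℂ (e4 0) * ι ℂ (e4 3)) = -W0 := by
        have hgp := quad_perm e4
          (⟨![2,1,0,3], ![2,1,0,3], by decide, by decide⟩ : Equiv.Perm (Fin 4))
        have hsg : Equiv.Perm.sign
            (⟨![2,1,0,3], ![2,1,0,3], by decide, by decide⟩ : Equiv.Perm (Fin 4)) = -1 := by
          decide
        rw [hsg, Units.neg_smul, one_smul] at hgp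
        exact hgp
      have hT2 : ι ℂ (e4 2) * ι ℂ (e4 1) * (ι ℂ (e4 3) * ι ℂ (e4 0)) = W0 := by
        have hgp := quad_perm e4
          (⟨![2,1,3,0], ![3,1,0,2], by decide, by decide⟩ : Equiv.Perm (Fin 4))
        have hsg : Equiv.Perm.sign
            (⟨![2,1,3,0], ![3,1,0,2], by decide, by decide⟩ : Equiv.Perm (Fin 4)) = 1 := by
          decide
        rw [hsg, one_smul] at hgp
        exact hgp
      rw [hT1, hT2] at h0
      exact cancel' _ _ h0
    have key30 : cc ![1,2] = cc ![2,1] := by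
      have hBij : B (e4 3) (e4 0) = 0 := (hperp (e4 3)).1 (hv'mem 1) (e4 0) (hvmem 0)
      have h0 : ι ℂ (e4 3) * ι ℂ (e4 0) * σ = 0 := by rw [hB, hBij, zero_smul]
      rw [hσsum, Finset.mul_sum] at h0
      simp only [mul_smul_comm] at h0
      rw [sum_two (fun p : Fin 2 → Fin 4 =>
            cc p • (ι ℂ (e4 3) * ι ℂ (e4 0) * (ι ℂ (e4 (p 0)) * ι ℂ (e4 (p 1)))))
          ![1,2] ![2,1] (by decide) ?_] at h0
      swap
      · intro p h1 h2
        have hidx : p 0 = 3 ∨ p 0 = 0 ∨ p 1 = 3 ∨ p 1 = 0 ∨ p 0 = p 1 := by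
          have hd : ∀ q : Fin 2 → Fin 4, q ≠ ![1,2] → q ≠ ![2,1] →
              (q 0 = 3 ∨ q 0 = 0 ∨ q 1 = 3 ∨ q 1 = 0 ∨ q 0 = q 1) := by decide
          exact hd p h1 h2
        have hq : ι ℂ (e4 3) * ι ℂ (e4 0) * (ι ℂ (e4 (p 0)) * ι ℂ (e4 (p 1))) = 0 := by
          rcases hidx with h' | h' | h' | h' | h'
          · exact quad_zero (Or.inr (Or.inl (congrArg e4 h').symm))
          · exact quad_zero (Or.inr (Or.inr (Or.inr (Or.inl (congrArg e4 h').symm))))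
          · exact quad_zero (Or.inr (Or.inr (Or.inl (congrArg e4 h').symm)))
          · exact quad_zero (Or.inr (Or.inr (Or.inr (Or.inr (Or.inl (congrArg e4 h').symm)))))
          · exact quad_zero (Or.inr (Or.inr (Or.inr (Or.inr (Or.inr (congrArg e4 h'))))))
        simp only [hq, smul_zero]
      simp only [Matrix.cons_val_zero, Matrix.cons_val_one, Matrix.head_cons] at h0
      have hT1 : ι ℂ (e4 3) * ι ℂ (e4 0) * (ι ℂ (e4 1) * ι ℂ (e4 2)) = -W0 := by
        have hgp := quad_perm e4
          (⟨![3,0,1,2], ![1,2,3,0], by decide, by decide⟩ : Equiv.Perm (Fin 4))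
        have hsg : Equiv.Perm.sign
            (⟨![3,0,1,2], ![1,2,3,0], by decide, by decide⟩ : Equiv.Perm (Fin 4)) = -1 := by
          decide
        rw [hsg, Units.neg_smul, one_smul] at hgp
        exact hgp
      have hT2 : ι ℂ (e4 3) * ι ℂ (e4 0) * (ι ℂ (e4 2) * ι ℂ (e4 1)) = W0 := by
        have hgp := quad_perm e4
          (⟨![3,0,2,1], ![1,3,2,0], by decide, by decide⟩ : Equiv.Perm (Fin 4))
        have hsg : Equiv.Perm.sign
            (⟨![3,0,2,1], ![1,3,2,0], by decide, by decide⟩ : Equiv.Perm (Fin 4)) = 1 := by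
          decide
        rw [hsg, one_smul] at hgp
        exact hgp
      rw [hT1, hT2] at h0
      exact cancel' _ _ h0
    have key31 : cc ![0,2] = cc ![2,0] := by
      have hBij : B (e4 3) (e4 1) = 0 := (hperp (e4 3)).1 (hv'mem 1) (e4 1) (hvmem 1)
      have h0 : ι ℂ (e4 3) * ι ℂ (e4 1) * σ = 0 := by rw [hB, hBij, zero_smul]
      rw [hσsum, Finset.mul_sum] at h0
      simp only [mul_smul_comm] at h0
      rw [sum_two (fun p : Fin 2 → Fin 4 =>
            cc p • (ι ℂ (e4 3) * ι ℂ (e4 1) * (ι ℂ (e4 (p 0)) * ι ℂ (e4 (p 1)))))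
          ![0,2] ![2,0] (by decide) ?_] at h0
      swap
      · intro p h1 h2
        have hidx : p 0 = 3 ∨ p 0 = 1 ∨ p 1 = 3 ∨ p 1 = 1 ∨ p 0 = p 1 := by
          have hd : ∀ q : Fin 2 → Fin 4, q ≠ ![0,2] → q ≠ ![2,0] →
              (q 0 = 3 ∨ q 0 = 1 ∨ q 1 = 3 ∨ q 1 = 1 ∨ q 0 = q 1) := by decide
          exact hd p h1 h2
        have hq : ι ℂ (e4 3) * ι ℂ (e4 1) * (ι ℂ (e4 (p 0)) * ι ℂ (e4 (p 1))) = 0 := by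
          rcases hidx with h' | h' | h' | h' | h'
          · exact quad_zero (Or.inr (Or.inl (congrArg e4 h').symm))
          · exact quad_zero (Or.inr (Or.inr (Or.inr (Or.inl (congrArg e4 h').symm))))
          · exact quad_zero (Or.inr (Or.inr (Or.inl (congrArg e4 h').symm)))
          · exact quad_zero (Or.inr (Or.inr (Or.inr (Or.inr (Or.inl (congrArg e4 h').symm)))))
          · exact quad_zero (Or.inr (Or.inr (Or.inr (Or.inr (Or.inr (congrArg e4 h'))))))
        simp only [hq, smul_zero]
      simp only [Matrix.cons_val_zero, Matrix.cons_val_one, Matrix.head_cons] at h0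
      have hT1 : ι ℂ (e4 3) * ι ℂ (e4 1) * (ι ℂ (e4 0) * ι ℂ (e4 2)) = W0 := by
        have hgp := quad_perm e4
          (⟨![3,1,0,2], ![2,1,3,0], by decide, by decide⟩ : Equiv.Perm (Fin 4))
        have hsg : Equiv.Perm.sign
            (⟨![3,1,0,2], ![2,1,3,0], by decide, by decide⟩ : Equiv.Perm (Fin 4)) = 1 := by
          decide
        rw [hsg, one_smul] at hgp
        exact hgp
      have hT2 : ι ℂ (e4 3) * ι ℂ (e4 1) * (ι ℂ (e4 2) * ι ℂ (e4 0)) = -W0 := by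
        have hgp := quad_perm e4
          (⟨![3,1,2,0], ![3,1,2,0], by decide, by decide⟩ : Equiv.Perm (Fin 4))
        have hsg : Equiv.Perm.sign
            (⟨![3,1,2,0], ![3,1,2,0], by decide, by decide⟩ : Equiv.Perm (Fin 4)) = -1 := by
          decide
        rw [hsg, Units.neg_smul, one_smul] at hgp
        exact hgp
      rw [hT1, hT2] at h0
      exact cancel _ _ h0
    have hsum16 : ∀ f : (Fin 2 → Fin 4) → ExteriorAlgebra ℂ V,
        (∑ p : Fin 2 → Fin 4, f p) = ∑ q : Fin 4 × Fin 4, f ![q.1, q.2] := by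
      intro f
      rw [← Equiv.sum_comp (finTwoArrowEquiv (Fin 4)).symm f]
      apply Finset.sum_congr rfl
      intro q _
      rfl
    have hσ16 : σ = ∑ q : Fin 4 × Fin 4, cc ![q.1, q.2] • (ι ℂ (e4 q.1) * ι ℂ (e4 q.2)) := by
      rw [hσsum, hsum16]
      apply Finset.sum_congr rfl
      intro q _
      simp only [Matrix.cons_val_zero, Matrix.cons_val_one, Matrix.head_cons]
    have hσαβ : σ = (cc ![0,1] - cc ![1,0]) • (ι ℂ (e4 0) * ι ℂ (e4 1))
        + (cc ![2,3] - cc ![3,2]) • (ι ℂ (e4 2) * ι ℂ (e4 3)) := by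
      rw [hσ16]
      simp only [Fintype.sum_prod_type, Fin.sum_univ_four]
      rw [← key20, ← key21, ← key30, ← key31]
      rw [iota_swap (e4 1) (e4 0), iota_swap (e4 2) (e4 0), iota_swap (e4 2) (e4 1),
        iota_swap (e4 3) (e4 0), iota_swap (e4 3) (e4 1), iota_swap (e4 3) (e4 2)]
      rw [ι_sq_zero (e4 0), ι_sq_zero (e4 1), ι_sq_zero (e4 2), ι_sq_zero (e4 3)]
      module
    set α : ℂ := cc ![0,1] - cc ![1,0] with hαdef
    set β : ℂ := cc ![2,3] - cc ![3,2] with hβdef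
    have hβ0 : β ≠ 0 := by
      intro h
      apply hσ
      rw [h, zero_smul, add_zero] at hσαβ
      exact ⟨α • e4 0, e4 1, by rw [map_smul, smul_mul_assoc, ← hσαβ]⟩
    have hα0 : α ≠ 0 := by
      intro h
      apply hσ
      rw [h, zero_smul, zero_add] at hσαβ
      exact ⟨β • e4 2, e4 3, by rw [map_smul, smul_mul_assoc, ← hσαβ]⟩
    refine ⟨-(β⁻¹ * α), β⁻¹, neg_ne_zero.2 (mul_ne_zero (inv_ne_zero hβ0) hα0), ?_⟩
    have hueq2 : u = ι ℂ (e4 0) * ι ℂ (e4 1) := by rw [hueq, iMulti_two]; rfl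
    have hu'eq2 : u' = ι ℂ (e4 2) * ι ℂ (e4 3) := by rw [hu'eq, iMulti_two]; rfl
    rw [hueq2, hu'eq2, hσαβ]
    match_scalars
    · field_simp
    · field_simp
      ring
end

section
/- Let V = ℂ⁶ with standard basis e₁,…,e₆ and let ω₁ = e₁∧e₂∧e₆ − e₁∧e₅∧e₃ + e₂∧e₃∧e₄ ∈ ⋀³V (so ω₁ is not decomposable). Then the linear projection π_{ω₁} : Gr₃V → ℙ((⋀³V)/ℂω₁) is injective. -/
set_option maxHeartbeats 2000000

open ExteriorAlgebra

/-- The standard basis of `ℂ⁶`. -/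
noncomputable def e : Fin 6 → (Fin 6 → ℂ) := fun i => Pi.single i 1

/-- `ω₁ = e₁∧e₂∧e₆ − e₁∧e₅∧e₃ + e₂∧e₃∧e₄`. -/
noncomputable def ω₁ : ExteriorAlgebra ℂ (Fin 6 → ℂ) :=
  ι ℂ (e 0) * ι ℂ (e 1) * ι ℂ (e 5) - ι ℂ (e 0) * ι ℂ (e 4) * ι ℂ (e 2)
    + ι ℂ (e 1) * ι ℂ (e 2) * ι ℂ (e 3)

/-! ### Auxiliary machinery -/

/-- A degree-4 coordinate functional on the exterior algebra, built from a linear map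
`g : ℂ⁶ → ℂ⁴` via the determinant. -/
noncomputable def φ (g : (Fin 6 → ℂ) →ₗ[ℂ] (Fin 4 → ℂ)) :
    ExteriorAlgebra ℂ (Fin 6 → ℂ) →ₗ[ℂ] ℂ :=
  liftAlternating (Function.update (fun i => (0 : (Fin 6 → ℂ) [⋀^Fin i]→ₗ[ℂ] ℂ)) 4
    (Matrix.detRowAlternating.compLinearMap g))

lemma phi_apply_iMulti (g : (Fin 6 → ℂ) →ₗ[ℂ] (Fin 4 → ℂ)) (y : Fin 4 → (Fin 6 → ℂ)) :
    φ g (ιMulti ℂ 4 y) = Matrix.det (Matrix.of fun i j => g (y i) j) := by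
  rw [φ, liftAlternating_apply_ιMulti, Function.update_self,
    AlternatingMap.compLinearMap_apply]
  rfl

lemma iMulti4 (a b c d : Fin 6 → ℂ) :
    ιMulti ℂ 4 ![a, b, c, d] = ι ℂ a * ι ℂ b * ι ℂ c * ι ℂ d := by
  simp [ιMulti_apply, List.ofFn_succ, mul_assoc]

lemma iMulti3 (w : Fin 3 → (Fin 6 → ℂ)) :
    ιMulti ℂ 3 w = ι ℂ (w 0) * ι ℂ (w 1) * ι ℂ (w 2) := by
  simp [ιMulti_apply, List.ofFn_succ, mul_assoc, Matrix.vecTail]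

lemma phi_apply4 (g : (Fin 6 → ℂ) →ₗ[ℂ] (Fin 4 → ℂ)) (a b c d : Fin 6 → ℂ) :
    φ g (ι ℂ a * ι ℂ b * ι ℂ c * ι ℂ d) =
      Matrix.det (Matrix.of ![![g a 0, g a 1, g a 2, g a 3], ![g b 0, g b 1, g b 2, g b 3],
        ![g c 0, g c 1, g c 2, g c 3], ![g d 0, g d 1, g d 2, g d 3]]) := by
  rw [← iMulti4, phi_apply_iMulti]
  congr 1
  ext i j
  fin_cases i <;> fin_cases j <;> rfl

lemma cons_val_three {α : Type*} {m : ℕ} (x : α) (u : Fin (m+3) → α) :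
    Matrix.vecCons x u 3 = Matrix.vecHead (Matrix.vecTail (Matrix.vecTail u)) := rfl

lemma det4 (a b c d e f g h i j k l m n o p : ℂ) :
    Matrix.det (Matrix.of ![![a,b,c,d],![e,f,g,h],![i,j,k,l],![m,n,o,p]]) =
      a*f*k*p - a*f*l*o - a*g*j*p + a*g*l*n + a*h*j*o - a*h*k*n - b*e*k*p + b*e*l*o
      + b*g*i*p - b*g*l*m - b*h*i*o + b*h*k*m + c*e*j*p - c*e*l*n - c*f*i*p + c*f*l*m
      + c*h*i*n - c*h*j*m - d*e*j*o + d*e*k*n + d*f*i*o - d*f*k*m - d*g*i*n + d*g*j*m := by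
  rw [Matrix.det_succ_row_zero]
  simp [Fin.sum_univ_succ, Matrix.det_fin_three, Matrix.submatrix, Fin.succAbove]
  ring

lemma iMulti_ne_zero (y : Fin 4 → (Fin 6 → ℂ)) (hy : LinearIndependent ℂ y) :
    ιMulti ℂ 4 y ≠ 0 := by
  set f : (Fin 4 → ℂ) →ₗ[ℂ] (Fin 6 → ℂ) := (Pi.basisFun ℂ (Fin 4)).constr ℂ y with hf
  have hfb : ∀ i, f (Pi.single i 1) = y i := by
    intro i
    rw [hf, ← Pi.basisFun_apply, Module.Basis.constr_basis]
  have hker : LinearMap.ker f = ⊥ := by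
    rw [LinearMap.ker_eq_bot']
    intro c hc
    have hsum : ∑ i, c i • y i = 0 := by
      rw [← hc, hf, Module.Basis.constr_apply_fintype]
      simp
    funext i
    exact Fintype.linearIndependent_iff.1 hy c hsum i
  obtain ⟨g, hg⟩ := f.exists_leftInverse_of_injective hker
  intro h0
  have hφ := congrArg (φ g) h0
  rw [phi_apply_iMulti, map_zero] at hφ
  have hgy : ∀ i, g (y i) = Pi.single i 1 := by
    intro i
    rw [← hfb i, ← LinearMap.comp_apply, hg, LinearMap.id_apply]
  rw [show (Matrix.of fun i j => g (y i) j) = (1 : Matrix (Fin 4) (Fin 4) ℂ) by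
      ext i j; simp [hgy, Matrix.one_apply, Pi.single_apply, eq_comm]] at hφ
  simp at hφ

lemma iMulti_succ (x : Fin 6 → ℂ) (v : Fin 3 → (Fin 6 → ℂ)) :
    ιMulti ℂ 4 (Fin.cons x v) = ι ℂ x * ιMulti ℂ 3 v := by
  rw [ιMulti_succ_apply, Fin.cons_zero]
  congr 1

lemma wedge_eq_zero_of_mem (v : Fin 3 → (Fin 6 → ℂ)) (x : Fin 6 → ℂ)
    (hx : x ∈ Submodule.span ℂ (Set.range v)) : ι ℂ x * ιMulti ℂ 3 v = 0 := by
  obtain ⟨c, rfl⟩ := (Submodule.mem_span_range_iff_exists_fun ℂ).1 hx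
  have hmap : ι ℂ (∑ i, c i • v i) = ∑ i, c i • ι ℂ (v i) := by
    simp
  rw [hmap, Finset.sum_mul]
  refine Finset.sum_eq_zero fun i _ => ?_
  rw [smul_mul_assoc, ← iMulti_succ (v i) v]
  rw [(ιMulti ℂ 4).map_eq_zero_of_eq (Fin.cons (v i) v) (i := 0) (j := i.succ) (by simp)
    (Fin.succ_ne_zero i).symm]
  simp

lemma mem_span_of_wedge (v : Fin 3 → (Fin 6 → ℂ)) (hv : LinearIndependent ℂ v) (x : Fin 6 → ℂ)
    (h : ι ℂ x * ιMulti ℂ 3 v = 0) : x ∈ Submodule.span ℂ (Set.range v) := by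
  by_contra hx
  exact iMulti_ne_zero _ (linearIndependent_fin_cons.2 ⟨hv, hx⟩) (by rw [iMulti_succ, h])

/-- The core computation: if `x ∧ (w₀∧w₁∧w₂) = t • (x ∧ ω₁)` with `t ≠ 0`, then the last three
coordinates of `x` vanish.  This is extracted from three Plücker quadrics satisfied by the
decomposable `4`-vector `x ∧ w₀ ∧ w₁ ∧ w₂`. -/
lemma key (w : Fin 3 → (Fin 6 → ℂ)) (x : Fin 6 → ℂ) (t : ℂ) (ht : t ≠ 0)
    (h : ι ℂ x * (ι ℂ (w 0) * ι ℂ (w 1) * ι ℂ (w 2)) = t • (ι ℂ x * ω₁)) :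
    x 3 = 0 ∧ x 4 = 0 ∧ x 5 = 0 := by
  rw [← mul_assoc, ← mul_assoc] at h
  have h0345 := congrArg (φ (LinearMap.funLeft ℂ ℂ ![0,3,4,5])) h
  rw [map_smul] at h0345
  simp only [ω₁, mul_sub, mul_add, map_sub, map_add, ← mul_assoc, phi_apply4, det4,
    LinearMap.funLeft_apply, smul_eq_mul, Matrix.cons_val_zero, Matrix.cons_val_one,
    Matrix.cons_val_two, Matrix.head_cons, Matrix.tail_cons, Matrix.head_fin_const,
    Matrix.cons_val_fin_one, cons_val_three] at h0345
  simp (config := { decide := true }) [Pi.single_apply, e] at h0345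
  have h0235 := congrArg (φ (LinearMap.funLeft ℂ ℂ ![0,2,3,5])) h
  rw [map_smul] at h0235
  simp only [ω₁, mul_sub, mul_add, map_sub, map_add, ← mul_assoc, phi_apply4, det4,
    LinearMap.funLeft_apply, smul_eq_mul, Matrix.cons_val_zero, Matrix.cons_val_one,
    Matrix.cons_val_two, Matrix.head_cons, Matrix.tail_cons, Matrix.head_fin_const,
    Matrix.cons_val_fin_one, cons_val_three] at h0235
  simp (config := { decide := true }) [Pi.single_apply, e] at h0235
  have h0135 := congrArg (φ (LinearMap.funLeft ℂ ℂ ![0,1,3,5])) h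
  rw [map_smul] at h0135
  simp only [ω₁, mul_sub, mul_add, map_sub, map_add, ← mul_assoc, phi_apply4, det4,
    LinearMap.funLeft_apply, smul_eq_mul, Matrix.cons_val_zero, Matrix.cons_val_one,
    Matrix.cons_val_two, Matrix.head_cons, Matrix.tail_cons, Matrix.head_fin_const,
    Matrix.cons_val_fin_one, cons_val_three] at h0135
  simp (config := { decide := true }) [Pi.single_apply, e] at h0135
  have h0234 := congrArg (φ (LinearMap.funLeft ℂ ℂ ![0,2,3,4])) h
  rw [map_smul] at h0234
  simp only [ω₁, mul_sub, mul_add, map_sub, map_add, ← mul_assoc, phi_apply4, det4,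
    LinearMap.funLeft_apply, smul_eq_mul, Matrix.cons_val_zero, Matrix.cons_val_one,
    Matrix.cons_val_two, Matrix.head_cons, Matrix.tail_cons, Matrix.head_fin_const,
    Matrix.cons_val_fin_one, cons_val_three] at h0234
  simp (config := { decide := true }) [Pi.single_apply, e] at h0234
  have h1345 := congrArg (φ (LinearMap.funLeft ℂ ℂ ![1,3,4,5])) h
  rw [map_smul] at h1345
  simp only [ω₁, mul_sub, mul_add, map_sub, map_add, ← mul_assoc, phi_apply4, det4,
    LinearMap.funLeft_apply, smul_eq_mul, Matrix.cons_val_zero, Matrix.cons_val_one,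
    Matrix.cons_val_two, Matrix.head_cons, Matrix.tail_cons, Matrix.head_fin_const,
    Matrix.cons_val_fin_one, cons_val_three] at h1345
  simp (config := { decide := true }) [Pi.single_apply, e] at h1345
  have h1245 := congrArg (φ (LinearMap.funLeft ℂ ℂ ![1,2,4,5])) h
  rw [map_smul] at h1245
  simp only [ω₁, mul_sub, mul_add, map_sub, map_add, ← mul_assoc, phi_apply4, det4,
    LinearMap.funLeft_apply, smul_eq_mul, Matrix.cons_val_zero, Matrix.cons_val_one,
    Matrix.cons_val_two, Matrix.head_cons, Matrix.tail_cons, Matrix.head_fin_const,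
    Matrix.cons_val_fin_one, cons_val_three] at h1245
  simp (config := { decide := true }) [Pi.single_apply, e] at h1245
  have h0145 := congrArg (φ (LinearMap.funLeft ℂ ℂ ![0,1,4,5])) h
  rw [map_smul] at h0145
  simp only [ω₁, mul_sub, mul_add, map_sub, map_add, ← mul_assoc, phi_apply4, det4,
    LinearMap.funLeft_apply, smul_eq_mul, Matrix.cons_val_zero, Matrix.cons_val_one,
    Matrix.cons_val_two, Matrix.head_cons, Matrix.tail_cons, Matrix.head_fin_const,
    Matrix.cons_val_fin_one, cons_val_three] at h0145
  simp (config := { decide := true }) [Pi.single_apply, e] at h0145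
  have h1234 := congrArg (φ (LinearMap.funLeft ℂ ℂ ![1,2,3,4])) h
  rw [map_smul] at h1234
  simp only [ω₁, mul_sub, mul_add, map_sub, map_add, ← mul_assoc, phi_apply4, det4,
    LinearMap.funLeft_apply, smul_eq_mul, Matrix.cons_val_zero, Matrix.cons_val_one,
    Matrix.cons_val_two, Matrix.head_cons, Matrix.tail_cons, Matrix.head_fin_const,
    Matrix.cons_val_fin_one, cons_val_three] at h1234
  simp (config := { decide := true }) [Pi.single_apply, e] at h1234
  have h2345 := congrArg (φ (LinearMap.funLeft ℂ ℂ ![2,3,4,5])) h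
  rw [map_smul] at h2345
  simp only [ω₁, mul_sub, mul_add, map_sub, map_add, ← mul_assoc, phi_apply4, det4,
    LinearMap.funLeft_apply, smul_eq_mul, Matrix.cons_val_zero, Matrix.cons_val_one,
    Matrix.cons_val_two, Matrix.head_cons, Matrix.tail_cons, Matrix.head_fin_const,
    Matrix.cons_val_fin_one, cons_val_three] at h2345
  simp (config := { decide := true }) [Pi.single_apply, e] at h2345
  have h0245 := congrArg (φ (LinearMap.funLeft ℂ ℂ ![0,2,4,5])) h
  rw [map_smul] at h0245
  simp only [ω₁, mul_sub, mul_add, map_sub, map_add, ← mul_assoc, phi_apply4, det4,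
    LinearMap.funLeft_apply, smul_eq_mul, Matrix.cons_val_zero, Matrix.cons_val_one,
    Matrix.cons_val_two, Matrix.head_cons, Matrix.tail_cons, Matrix.head_fin_const,
    Matrix.cons_val_fin_one, cons_val_three] at h0245
  simp (config := { decide := true }) [Pi.single_apply, e] at h0245
  have h1235 := congrArg (φ (LinearMap.funLeft ℂ ℂ ![1,2,3,5])) h
  rw [map_smul] at h1235
  simp only [ω₁, mul_sub, mul_add, map_sub, map_add, ← mul_assoc, phi_apply4, det4,
    LinearMap.funLeft_apply, smul_eq_mul, Matrix.cons_val_zero, Matrix.cons_val_one,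
    Matrix.cons_val_two, Matrix.head_cons, Matrix.tail_cons, Matrix.head_fin_const,
    Matrix.cons_val_fin_one, cons_val_three] at h1235
  simp (config := { decide := true }) [Pi.single_apply, e] at h1235
  refine ⟨?_, ?_, ?_⟩
  · have h3 : t * t * (x 3 * x 3) = 0 := by
      linear_combination (-(x 0*w 0 1*w 1 2*w 2 3 - x 0*w 0 1*w 1 3*w 2 2 - x 0*w 0 2*w 1 1*w 2 3 + x 0*w 0 2*w 1 3*w 2 1 + x 0*w 0 3*w 1 1*w 2 2 - x 0*w 0 3*w 1 2*w 2 1 - x 1*w 0 0*w 1 2*w 2 3 + x 1*w 0 0*w 1 3*w 2 2 + x 1*w 0 2*w 1 0*w 2 3 - x 1*w 0 2*w 1 3*w 2 0 - x 1*w 0 3*w 1 0*w 2 2 + x 1*w 0 3*w 1 2*w 2 0 + x 2*w 0 0*w 1 1*w 2 3 - x 2*w 0 0*w 1 3*w 2 1 - x 2*w 0 1*w 1 0*w 2 3 + x 2*w 0 1*w 1 3*w 2 0 + x 2*w 0 3*w 1 0*w 2 1 - x 2*w 0 3*w 1 1*w 2 0 - x 3*w 0 0*w 1 1*w 2 2 +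 x 3*w 0 0*w 1 2*w 2 1 + x 3*w 0 1*w 1 0*w 2 2 - x 3*w 0 1*w 1 2*w 2 0 - x 3*w 0 2*w 1 0*w 2 1 + x 3*w 0 2*w 1 1*w 2 0)) * h0345 + (x 0*w 0 1*w 1 3*w 2 4 - x 0*w 0 1*w 1 4*w 2 3 - x 0*w 0 3*w 1 1*w 2 4 + x 0*w 0 3*w 1 4*w 2 1 + x 0*w 0 4*w 1 1*w 2 3 - x 0*w 0 4*w 1 3*w 2 1 - x 1*w 0 0*w 1 3*w 2 4 + x 1*w 0 0*w 1 4*w 2 3 + x 1*w 0 3*w 1 0*w 2 4 - x 1*w 0 3*w 1 4*w 2 0 - x 1*w 0 4*w 1 0*w 2 3 + x 1*w 0 4*w 1 3*w 2 0 + x 3*w 0 0*w 1 1*w 2 4 - x 3*w 0 0*w 1 4*w 2 1 - x 3*w 0 1*w 1 0*w 2 4 + x 3*w 0 1*w 1 4*w 2 0 + x 3*w 0 4*w 1 0*w 2 1 - x 3*w 0 4*w 1 1*w 2 0 - x 4*w 0 0*w 1 1*w 2 3 + x 4*w 0 0*w 1 3*w 2 1 + x 4*w 0 1*w 1 0*w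 2 3 - x 4*w 0 1*w 1 3*w 2 0 - x 4*w 0 3*w 1 0*w 2 1 + x 4*w 0 3*w 1 1*w 2 0) * h0235 - (t * x 3) * h0135 - (x 0*w 0 1*w 1 3*w 2 5 - x 0*w 0 1*w 1 5*w 2 3 - x 0*w 0 3*w 1 1*w 2 5 + x 0*w 0 3*w 1 5*w 2 1 + x 0*w 0 5*w 1 1*w 2 3 - x 0*w 0 5*w 1 3*w 2 1 - x 1*w 0 0*w 1 3*w 2 5 + x 1*w 0 0*w 1 5*w 2 3 + x 1*w 0 3*w 1 0*w 2 5 - x 1*w 0 3*w 1 5*w 2 0 - x 1*w 0 5*w 1 0*w 2 3 + x 1*w 0 5*w 1 3*w 2 0 + x 3*w 0 0*w 1 1*w 2 5 - x 3*w 0 0*w 1 5*w 2 1 - x 3*w 0 1*w 1 0*w 2 5 + x 3*w 0 1*w 1 5*w 2 0 + x 3*w 0 5*w 1 0*w 2 1 - x 3*w 0 5*w 1 1*w 2 0 - x 5*w 0 0*w 1 1*w 2 3 + x 5*w 0 0*w 1 3*w 2 1 + x 5*w 0 1*w 1 0*w 2 3 - x 5*w 0 1*w 1 3*w 2 0 -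 x 5*w 0 3*w 1 0*w 2 1 + x 5*w 0 3*w 1 1*w 2 0) * h0234
    rcases mul_eq_zero.1 h3 with h' | h'
    · exact absurd (mul_self_eq_zero.1 h') ht
    · exact mul_self_eq_zero.1 h'
  · have h4 : t * t * (x 4 * x 4) = 0 := by
      linear_combination (x 0*w 0 1*w 1 2*w 2 4 - x 0*w 0 1*w 1 4*w 2 2 - x 0*w 0 2*w 1 1*w 2 4 + x 0*w 0 2*w 1 4*w 2 1 + x 0*w 0 4*w 1 1*w 2 2 - x 0*w 0 4*w 1 2*w 2 1 - x 1*w 0 0*w 1 2*w 2 4 + x 1*w 0 0*w 1 4*w 2 2 + x 1*w 0 2*w 1 0*w 2 4 - x 1*w 0 2*w 1 4*w 2 0 - x 1*w 0 4*w 1 0*w 2 2 + x 1*w 0 4*w 1 2*w 2 0 + x 2*w 0 0*w 1 1*w 2 4 - x 2*w 0 0*w 1 4*w 2 1 - x 2*w 0 1*w 1 0*w 2 4 + x 2*w 0 1*w 1 4*w 2 0 + x 2*w 0 4*w 1 0*w 2 1 - x 2*w 0 4*w 1 1*w 2 0 - x 4*w 0 0*w 1 1*w 2 2 + x 4*w 0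 0*w 1 2*w 2 1 + x 4*w 0 1*w 1 0*w 2 2 - x 4*w 0 1*w 1 2*w 2 0 - x 4*w 0 2*w 1 0*w 2 1 + x 4*w 0 2*w 1 1*w 2 0) * h1345 - (x 0*w 0 1*w 1 3*w 2 4 - x 0*w 0 1*w 1 4*w 2 3 - x 0*w 0 3*w 1 1*w 2 4 + x 0*w 0 3*w 1 4*w 2 1 + x 0*w 0 4*w 1 1*w 2 3 - x 0*w 0 4*w 1 3*w 2 1 - x 1*w 0 0*w 1 3*w 2 4 + x 1*w 0 0*w 1 4*w 2 3 + x 1*w 0 3*w 1 0*w 2 4 - x 1*w 0 3*w 1 4*w 2 0 - x 1*w 0 4*w 1 0*w 2 3 + x 1*w 0 4*w 1 3*w 2 0 + x 3*w 0 0*w 1 1*w 2 4 - x 3*w 0 0*w 1 4*w 2 1 - x 3*w 0 1*w 1 0*w 2 4 + x 3*w 0 1*w 1 4*w 2 0 + x 3*w 0 4*w 1 0*w 2 1 - x 3*w 0 4*w 1 1*w 2 0 - x 4*w 0 0*w 1 1*w 2 3 + x 4*w 0 0*w 1 3*w 2 1 + x 4*w 0 1*w 1 0*w 2 3 - x 4*w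 0 1*w 1 3*w 2 0 - x 4*w 0 3*w 1 0*w 2 1 + x 4*w 0 3*w 1 1*w 2 0) * h1245 - (t * x 4) * h0145 + (x 0*w 0 1*w 1 4*w 2 5 - x 0*w 0 1*w 1 5*w 2 4 - x 0*w 0 4*w 1 1*w 2 5 + x 0*w 0 4*w 1 5*w 2 1 + x 0*w 0 5*w 1 1*w 2 4 - x 0*w 0 5*w 1 4*w 2 1 - x 1*w 0 0*w 1 4*w 2 5 + x 1*w 0 0*w 1 5*w 2 4 + x 1*w 0 4*w 1 0*w 2 5 - x 1*w 0 4*w 1 5*w 2 0 - x 1*w 0 5*w 1 0*w 2 4 + x 1*w 0 5*w 1 4*w 2 0 + x 4*w 0 0*w 1 1*w 2 5 - x 4*w 0 0*w 1 5*w 2 1 - x 4*w 0 1*w 1 0*w 2 5 + x 4*w 0 1*w 1 5*w 2 0 + x 4*w 0 5*w 1 0*w 2 1 - x 4*w 0 5*w 1 1*w 2 0 - x 5*w 0 0*w 1 1*w 2 4 + x 5*w 0 0*w 1 4*w 2 1 + x 5*w 0 1*w 1 0*w 2 4 - x 5*w 0 1*w 1 4*w 2 0 - x 5*w 0 4*w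 1 0*w 2 1 + x 5*w 0 4*w 1 1*w 2 0) * h1234
    rcases mul_eq_zero.1 h4 with h' | h'
    · exact absurd (mul_self_eq_zero.1 h') ht
    · exact mul_self_eq_zero.1 h'
  · have h5 : t * t * (x 5 * x 5) = 0 := by
      linear_combination (-(x 0*w 0 1*w 1 2*w 2 5 - x 0*w 0 1*w 1 5*w 2 2 - x 0*w 0 2*w 1 1*w 2 5 + x 0*w 0 2*w 1 5*w 2 1 + x 0*w 0 5*w 1 1*w 2 2 - x 0*w 0 5*w 1 2*w 2 1 - x 1*w 0 0*w 1 2*w 2 5 + x 1*w 0 0*w 1 5*w 2 2 + x 1*w 0 2*w 1 0*w 2 5 - x 1*w 0 2*w 1 5*w 2 0 - x 1*w 0 5*w 1 0*w 2 2 + x 1*w 0 5*w 1 2*w 2 0 + x 2*w 0 0*w 1 1*w 2 5 - x 2*w 0 0*w 1 5*w 2 1 - x 2*w 0 1*w 1 0*w 2 5 + x 2*w 0 1*w 1 5*w 2 0 + x 2*w 0 5*w 1 0*w 2 1 - x 2*w 0 5*w 1 1*w 2 0 - x 5*w 0 0*w 1 1*w 2 2 + x 5*w 0 0*w 1 2*w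 2 1 + x 5*w 0 1*w 1 0*w 2 2 - x 5*w 0 1*w 1 2*w 2 0 - x 5*w 0 2*w 1 0*w 2 1 + x 5*w 0 2*w 1 1*w 2 0)) * h2345 + (x 0*w 0 2*w 1 3*w 2 5 - x 0*w 0 2*w 1 5*w 2 3 - x 0*w 0 3*w 1 2*w 2 5 + x 0*w 0 3*w 1 5*w 2 2 + x 0*w 0 5*w 1 2*w 2 3 - x 0*w 0 5*w 1 3*w 2 2 - x 2*w 0 0*w 1 3*w 2 5 + x 2*w 0 0*w 1 5*w 2 3 + x 2*w 0 3*w 1 0*w 2 5 - x 2*w 0 3*w 1 5*w 2 0 - x 2*w 0 5*w 1 0*w 2 3 + x 2*w 0 5*w 1 3*w 2 0 + x 3*w 0 0*w 1 2*w 2 5 - x 3*w 0 0*w 1 5*w 2 2 - x 3*w 0 2*w 1 0*w 2 5 + x 3*w 0 2*w 1 5*w 2 0 + x 3*w 0 5*w 1 0*w 2 2 - x 3*w 0 5*w 1 2*w 2 0 - x 5*w 0 0*w 1 2*w 2 3 + x 5*w 0 0*w 1 3*w 2 2 + x 5*w 0 2*w 1 0*w 2 3 - x 5*w 0 2*w 1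 3*w 2 0 - x 5*w 0 3*w 1 0*w 2 2 + x 5*w 0 3*w 1 2*w 2 0) * h1245 + (t * x 5) * h0245 - (x 0*w 0 2*w 1 4*w 2 5 - x 0*w 0 2*w 1 5*w 2 4 - x 0*w 0 4*w 1 2*w 2 5 + x 0*w 0 4*w 1 5*w 2 2 + x 0*w 0 5*w 1 2*w 2 4 - x 0*w 0 5*w 1 4*w 2 2 - x 2*w 0 0*w 1 4*w 2 5 + x 2*w 0 0*w 1 5*w 2 4 + x 2*w 0 4*w 1 0*w 2 5 - x 2*w 0 4*w 1 5*w 2 0 - x 2*w 0 5*w 1 0*w 2 4 + x 2*w 0 5*w 1 4*w 2 0 + x 4*w 0 0*w 1 2*w 2 5 - x 4*w 0 0*w 1 5*w 2 2 - x 4*w 0 2*w 1 0*w 2 5 + x 4*w 0 2*w 1 5*w 2 0 + x 4*w 0 5*w 1 0*w 2 2 - x 4*w 0 5*w 1 2*w 2 0 - x 5*w 0 0*w 1 2*w 2 4 + x 5*w 0 0*w 1 4*w 2 2 + x 5*w 0 2*w 1 0*w 2 4 - x 5*w 0 2*w 1 4*w 2 0 - x 5*w 0 4*w 1 0*w 2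 2 + x 5*w 0 4*w 1 2*w 2 0) * h1235
    rcases mul_eq_zero.1 h5 with h' | h'
    · exact absurd (mul_self_eq_zero.1 h') ht
    · exact mul_self_eq_zero.1 h'

/-- The subspace `span(e₀,e₁,e₂)`. -/
noncomputable def Esp : Submodule ℂ (Fin 6 → ℂ) := Submodule.span ℂ (Set.range ![e 0, e 1, e 2])

lemma Eind : LinearIndependent ℂ ![e 0, e 1, e 2] := by
  rw [Fintype.linearIndependent_iff]
  intro c hc i
  simp only [Fin.sum_univ_three, Matrix.cons_val_zero, Matrix.cons_val_one, Matrix.head_cons,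
    Matrix.cons_val_two, Matrix.tail_cons] at hc
  have h0 := congrFun hc 0
  have h1 := congrFun hc 1
  have h2 := congrFun hc 2
  simp (config := { decide := true }) [e, Pi.single_apply] at h0 h1 h2
  fin_cases i
  · exact h0
  · exact h1
  · exact h2

lemma Efinrank : Module.finrank ℂ Esp = 3 := by
  rw [Esp, finrank_span_eq_card Eind]
  simp

lemma mem_Esp (x : Fin 6 → ℂ) (h3 : x 3 = 0) (h4 : x 4 = 0) (h5 : x 5 = 0) : x ∈ Esp := by
  have hx : x = x 0 • e 0 + x 1 • e 1 + x 2 • e 2 := by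
    funext j
    fin_cases j <;>
      simp (config := { decide := true }) [e, Pi.single_apply, h3, h4, h5]
  rw [hx]
  have m0 : e 0 ∈ Set.range ![e 0, e 1, e 2] := ⟨0, rfl⟩
  have m1 : e 1 ∈ Set.range ![e 0, e 1, e 2] := ⟨1, rfl⟩
  have m2 : e 2 ∈ Set.range ![e 0, e 1, e 2] := ⟨2, rfl⟩
  exact add_mem (add_mem (Submodule.smul_mem _ _ (Submodule.subset_span m0))
    (Submodule.smul_mem _ _ (Submodule.subset_span m1)))
    (Submodule.smul_mem _ _ (Submodule.subset_span m2))

/-- the linear projection `π_{ω₁} : Gr₃ℂ⁶ → ℙ((⋀³ℂ⁶)/ℂω₁)` is injective. -/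
theorem stmt4 (Λ Λ' : Submodule ℂ (Fin 6 → ℂ))
    (hΛ : Module.finrank ℂ Λ = 3) (hΛ' : Module.finrank ℂ Λ' = 3)
    (u u' : ExteriorAlgebra ℂ (Fin 6 → ℂ))
    (hu : IsPluckerVector 3 Λ u) (hu' : IsPluckerVector 3 Λ' u')
    (h : ProjEq (Submodule.span ℂ {ω₁}) u u') :
    Λ = Λ' := by
  obtain ⟨v, hvsp, huv⟩ := hu
  obtain ⟨v', hvsp', huv'⟩ := hu'
  have hvind : LinearIndependent ℂ v := by
    rw [linearIndependent_iff_card_eq_finrank_span, Set.finrank, hvsp, hΛ]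
    simp
  have hv'ind : LinearIndependent ℂ v' := by
    rw [linearIndependent_iff_card_eq_finrank_span, Set.finrank, hvsp', hΛ']
    simp
  obtain ⟨z, hz⟩ := Submodule.span_singleton_eq_span_singleton.1 h
  have hmem : u' - (z : ℂ) • u ∈ Submodule.span ℂ {ω₁} := by
    rw [← Submodule.ker_mkQ (Submodule.span ℂ {ω₁}), LinearMap.mem_ker, map_sub, map_smul]
    rw [← hz, Units.smul_def]
    abel
  obtain ⟨b, hb⟩ := Submodule.mem_span_singleton.1 hmem
  set c : ℂ := (z : ℂ) with hcdef
  have hcne : c ≠ 0 := z.ne_zero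
  have hu'eq : u' = c • u + b • ω₁ := by
    rw [hb]
    abel
  by_cases hb0 : b = 0
  · -- `u' = c • u`, so the two subspaces have the same wedge-annihilator.
    have hu'c : u' = c • u := by rw [hu'eq, hb0, zero_smul, add_zero]
    have hle : Λ' ≤ Λ := by
      rw [← hvsp', ← hvsp, Submodule.span_le]
      rintro _ ⟨i, rfl⟩
      apply mem_span_of_wedge v hvind
      have h1 : ι ℂ (v' i) * u' = 0 := by
        rw [huv']
        exact wedge_eq_zero_of_mem v' (v' i) (Submodule.subset_span ⟨i, rfl⟩)
      rw [hu'c, mul_smul_comm] at h1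
      have h2 := (smul_eq_zero.1 h1).resolve_left hcne
      rwa [huv] at h2
    exact (Submodule.eq_of_le_of_finrank_eq hle (hΛ'.trans hΛ.symm)).symm
  · -- `b ≠ 0`: both `Λ` and `Λ'` coincide with `span(e₀,e₁,e₂)`.
    have hΛE : Λ ≤ Esp := by
      intro x hx
      have hxu : ι ℂ x * u = 0 := by
        rw [huv]
        exact wedge_eq_zero_of_mem v x (by rw [hvsp]; exact hx)
      have hkey : ι ℂ x * (ι ℂ (v' 0) * ι ℂ (v' 1) * ι ℂ (v' 2)) = b • (ι ℂ x * ω₁) := by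
        rw [← iMulti3, ← huv', hu'eq, mul_add, mul_smul_comm, mul_smul_comm, hxu, smul_zero,
          zero_add]
      obtain ⟨h3, h4, h5⟩ := key v' x b hb0 hkey
      exact mem_Esp x h3 h4 h5
    have hΛ'E : Λ' ≤ Esp := by
      intro x hx
      have hxu' : ι ℂ x * u' = 0 := by
        rw [huv']
        exact wedge_eq_zero_of_mem v' x (by rw [hvsp']; exact hx)
      have hsum : c • (ι ℂ x * u) + b • (ι ℂ x * ω₁) = 0 := by
        rw [← mul_smul_comm, ← mul_smul_comm, ← mul_add, ← hu'eq, hxu']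
      have hkey : ι ℂ x * (ι ℂ (v 0) * ι ℂ (v 1) * ι ℂ (v 2)) = (-(b/c)) • (ι ℂ x * ω₁) := by
        rw [← iMulti3, ← huv]
        have h2 : c • (ι ℂ x * u) = (-b) • (ι ℂ x * ω₁) := by
          rw [neg_smul, eq_neg_iff_add_eq_zero]
          exact hsum
        have h3 := congrArg (fun y => c⁻¹ • y) h2
        simpa [smul_smul, inv_mul_cancel₀ hcne, div_eq_mul_inv, mul_comm] using h3
      obtain ⟨h3, h4, h5⟩ := key v x (-(b/c)) (by simp [hb0, hcne]) hkey
      exact mem_Esp x h3 h4 h5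
    have h1 : Λ = Esp := Submodule.eq_of_le_of_finrank_eq hΛE (by rw [hΛ, Efinrank])
    have h2 : Λ' = Esp := Submodule.eq_of_le_of_finrank_eq hΛ'E (by rw [hΛ', Efinrank])
    rw [h1, h2]
end

section
/- Let V be a 6-dimensional complex vector space and let ω = α∧σ ∈ ⋀³V, where α ∈ V is nonzero and σ ∈ ⋀²V satisfies α∧σ∧σ ≠ 0. Then the kernel of the linear map ∧ω : V → ⋀⁴V, v ↦ v∧ω, is exactly the line ℂα, and the kernel of the contraction map ⌟ω : V* → ⋀²V, f ↦ f⌟ω, is one-dimensional. -/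
set_option maxRecDepth 40000

open ExteriorAlgebra

namespace Stmt5Aux

variable {V : Type*} [AddCommGroup V] [Module ℂ V]

local notation "E" => ExteriorAlgebra ℂ V

/-- contraction as a bilinear map -/
noncomputable def ctrL : Module.Dual ℂ V →ₗ[ℂ] E →ₗ[ℂ] E :=
  CliffordAlgebra.contractLeft

lemma ctrL_ι_mul (g : Module.Dual ℂ V) (a : V) (x : E) :
    ctrL g (ι ℂ a * x) = g a • x - ι ℂ a * ctrL g x :=
  CliffordAlgebra.contractLeft_ι_mul g a x

lemma ctrL_ι (g : Module.Dual ℂ V) (a : V) :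
    ctrL g (ι ℂ a) = algebraMap ℂ E (g a) :=
  CliffordAlgebra.contractLeft_ι _ g a

lemma swap_ι (x y : V) : ι ℂ x * ι ℂ y = -(ι ℂ y * ι ℂ x) :=
  eq_neg_of_add_eq_zero_left (ι_add_mul_swap x y)

/-- span of products of two vectors from a submodule -/
def pS (T : Submodule ℂ V) : Submodule ℂ E :=
  Submodule.span ℂ {z : E | ∃ r ∈ T, ∃ s ∈ T, z = ι ℂ r * ι ℂ s}

lemma pS_mono {T T' : Submodule ℂ V} (h : T ≤ T') : pS T ≤ pS T' := by
  apply Submodule.span_mono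
  rintro z ⟨r, hr, s, hs, rfl⟩
  exact ⟨r, h hr, s, h hs, rfl⟩

lemma sq_mem_pS {σ : E} (h : σ ∈ ⋀[ℂ]^2 V) : σ ∈ pS (⊤ : Submodule ℂ V) := by
  have h2 : σ ∈ LinearMap.range (ι ℂ : V →ₗ[ℂ] E) * LinearMap.range (ι ℂ : V →ₗ[ℂ] E) := by
    rw [← pow_two]; exact h
  refine Submodule.mul_induction_on h2 ?_ ?_
  · rintro x ⟨r, rfl⟩ y ⟨s, rfl⟩
    exact Submodule.subset_span ⟨r, trivial, s, trivial, rfl⟩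
  · intro x y hx hy; exact add_mem hx hy

lemma comm_pS {T : Submodule ℂ V} {z : E} (hz : z ∈ pS T) (x : V) :
    ι ℂ x * z = z * ι ℂ x := by
  induction hz using Submodule.span_induction with
  | mem w hw =>
    obtain ⟨r, -, s, -, rfl⟩ := hw
    rw [← mul_assoc, swap_ι x r, neg_mul, mul_assoc, swap_ι x s, mul_neg, neg_neg,
      ← mul_assoc]
  | zero => simp
  | add a b ha hb iha ihb => rw [mul_add, iha, ihb, add_mul]
  | smul c a ha iha => rw [mul_smul_comm, iha, smul_mul_assoc]

lemma ctrL_pS_zero {T : Submodule ℂ V} (g : Module.Dual ℂ V) (hg : ∀ x ∈ T, g x = 0)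
    {z : E} (hz : z ∈ pS T) : ctrL g z = 0 := by
  induction hz using Submodule.span_induction with
  | mem w hw =>
    obtain ⟨r, hr, s, hs, rfl⟩ := hw
    rw [ctrL_ι_mul, ctrL_ι, hg r hr, hg s hs, zero_smul, map_zero, mul_zero, sub_zero]
  | zero => simp
  | add a b ha hb iha ihb => rw [map_add, iha, ihb, add_zero]
  | smul c a ha iha => rw [map_smul, iha, smul_zero]

lemma ctr_sq_mem_range {σ : E} (h : σ ∈ ⋀[ℂ]^2 V) (g : Module.Dual ℂ V) :
    ctrL g σ ∈ LinearMap.range (ι ℂ : V →ₗ[ℂ] E) := by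
  have h2 : σ ∈ LinearMap.range (ι ℂ : V →ₗ[ℂ] E) * LinearMap.range (ι ℂ : V →ₗ[ℂ] E) := by
    rw [← pow_two]; exact h
  refine Submodule.mul_induction_on h2 ?_ ?_
  · rintro x ⟨r, rfl⟩ y ⟨s, rfl⟩
    refine ⟨g r • s - g s • r, ?_⟩
    rw [map_sub, map_smul, map_smul, ctrL_ι_mul, ctrL_ι, Algebra.algebraMap_eq_smul_one,
      mul_smul_comm, mul_one]
  · intro x y hx hy
    rw [map_add]
    exact add_mem hx hy

lemma key_id (a u v : V) (c d : ℂ) :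
    ι ℂ (u + c • a) * ι ℂ (v + d • a) = ι ℂ a * ι ℂ (c • v - d • u) + ι ℂ u * ι ℂ v := by
  have h1 := ι_sq_zero (R := ℂ) a
  have h2 := swap_ι u a
  simp only [map_add, map_smul, map_sub, mul_add, add_mul, mul_sub, sub_mul,
    smul_mul_assoc, mul_smul_comm, smul_smul, h1, smul_zero, h2]
  module

lemma dec {T T' : Submodule ℂ V} (a : V) (q : Module.Dual ℂ V)
    (hT : ∀ x ∈ T, x - q x • a ∈ T') {z : E} (hz : z ∈ pS T) :
    ∃ β : V, ∃ y ∈ pS T', z = ι ℂ a * ι ℂ β + y := by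
  induction hz using Submodule.span_induction with
  | mem w hw =>
    obtain ⟨r, hr, s, hs, rfl⟩ := hw
    refine ⟨q r • (s - q s • a) - q s • (r - q r • a),
      ι ℂ (r - q r • a) * ι ℂ (s - q s • a),
      Submodule.subset_span ⟨_, hT r hr, _, hT s hs, rfl⟩, ?_⟩
    have := key_id a (r - q r • a) (s - q s • a) (q r) (q s)
    rw [sub_add_cancel, sub_add_cancel] at this
    exact this
  | zero => exact ⟨0, 0, zero_mem _, by simp⟩
  | add x y hx hy ihx ihy =>
    obtain ⟨β1, y1, hy1, rfl⟩ := ihx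
    obtain ⟨β2, y2, hy2, rfl⟩ := ihy
    exact ⟨β1 + β2, y1 + y2, add_mem hy1 hy2, by rw [map_add, mul_add]; abel⟩
  | smul c x hx ihx =>
    obtain ⟨β1, y1, hy1, rfl⟩ := ihx
    exact ⟨c • β1, c • y1, Submodule.smul_mem _ _ hy1, by rw [map_smul, mul_smul_comm, smul_add]⟩

/-- product of `ι` of basis vectors along an index list -/
noncomputable def Pl (b : Fin 6 → V) (l : List (Fin 6)) : E :=
  (l.map (fun i => ι ℂ (b i))).prod

lemma Pl_cons (b : Fin 6 → V) (i : Fin 6) (l : List (Fin 6)) :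
    Pl b (i :: l) = ι ℂ (b i) * Pl b l := by
  simp [Pl]

lemma Pl_perm (b : Fin 6 → V) {l l' : List (Fin 6)} (h : l.Perm l') :
    Pl b l = Pl b l' ∨ Pl b l = -Pl b l' := by
  induction h with
  | nil => exact Or.inl rfl
  | cons x h ih =>
    rcases ih with ih | ih
    · exact Or.inl (by rw [Pl_cons, Pl_cons, ih])
    · exact Or.inr (by rw [Pl_cons, Pl_cons, ih, mul_neg])
  | swap x y l =>
    refine Or.inr ?_
    rw [Pl_cons, Pl_cons, Pl_cons, Pl_cons, ← mul_assoc, ← mul_assoc, swap_ι (b y) (b x),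
      neg_mul]
  | trans h1 h2 ih1 ih2 =>
    rcases ih1 with ih1 | ih1 <;> rcases ih2 with ih2 | ih2
    · exact Or.inl (ih1.trans ih2)
    · exact Or.inr (ih1.trans ih2)
    · exact Or.inr (by rw [ih1, ih2])
    · exact Or.inl (by rw [ih1, ih2, neg_neg])

lemma Pl_dup (b : Fin 6 → V) {l : List (Fin 6)} (h : ¬ l.Nodup) : Pl b l = 0 := by
  induction l with
  | nil => simp at h
  | cons a t ih =>
    by_cases hat : a ∈ t
    · have hperm : (a :: t).Perm (a :: a :: t.erase a) :=
        (List.perm_cons_erase hat).cons a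
      have h0 : Pl b (a :: a :: t.erase a) = 0 := by
        rw [Pl_cons, Pl_cons, ← mul_assoc, ι_sq_zero, zero_mul]
      rcases Pl_perm b hperm with h' | h' <;> rw [h', h0] <;> simp
    · have ht : ¬ t.Nodup := by
        intro hnd
        exact h (List.nodup_cons.mpr ⟨hat, hnd⟩)
      rw [Pl_cons, ih ht, mul_zero]

lemma Pl_top_ne (b : Module.Basis (Fin 6) ℂ V) : Pl (⇑b) (List.finRange 6) ≠ 0 := by
  have h1 : Pl (⇑b) (List.finRange 6) = ιMulti ℂ 6 ⇑b := by
    rw [ιMulti_apply, List.ofFn_eq_map]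
    rfl
  intro h0
  rw [h1] at h0
  let F : ∀ n : ℕ, V [⋀^Fin n]→ₗ[ℂ] ℂ := fun n =>
    if hn : n = 6 then hn ▸ b.det else 0
  have h2 : liftAlternating (R := ℂ) (M := V) (N := ℂ) F (ιMulti ℂ 6 ⇑b) = 1 := by
    rw [liftAlternating_apply_ιMulti]
    show F 6 ⇑b = 1
    rw [show F 6 = b.det from dif_pos rfl]
    exact b.det_self
  rw [h0, map_zero] at h2
  exact zero_ne_one h2

lemma Pl_perm_ne (b : Module.Basis (Fin 6) ℂ V) {l : List (Fin 6)} (h : l.Perm (List.finRange 6)) :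
    Pl (⇑b) l ≠ 0 := by
  rcases Pl_perm (⇑b) h with h' | h' <;> rw [h'] <;> simp [Pl_top_ne b]

lemma dual_one {v : V} (hv : v ≠ 0) : ∃ p : Module.Dual ℂ V, p v = 1 := by
  have h := (Module.forall_dual_apply_eq_zero_iff ℂ v).not.mpr hv
  push_neg at h
  obtain ⟨f, hf⟩ := h
  exact ⟨(f v)⁻¹ • f, by simp [inv_mul_cancel₀ hf]⟩

lemma exists_basis [FiniteDimensional ℂ V] (hV : Module.finrank ℂ V = 6) {α : V}
    (hα : α ≠ 0) : ∃ b : Module.Basis (Fin 6) ℂ V, b 0 = α := by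
  obtain ⟨p, hp⟩ := dual_one hα
  have hrange : LinearMap.range p = ⊤ := by
    rw [LinearMap.range_eq_top]
    intro c
    exact ⟨c • α, by simp [hp]⟩
  have hker : Module.finrank ℂ (LinearMap.ker p) = 5 := by
    have h := LinearMap.finrank_range_add_finrank_ker p
    rw [hrange, finrank_top, hV] at h
    simp [Module.finrank_self] at h
    omega
  let bN : Module.Basis (Fin 5) ℂ (LinearMap.ker p) := Module.finBasisOfFinrankEq ℂ _ hker
  refine ⟨Module.Basis.mkFinCons (n := 5) α bN ?_ ?_, ?_⟩
  · intro c x hx hcx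
    have h2 := congrArg p hcx
    simp [hp, LinearMap.mem_ker.mp hx] at h2
    exact h2
  · intro z
    refine ⟨-(p z), ?_⟩
    simp [LinearMap.mem_ker, hp]
  · simp [Module.Basis.coe_mkFinCons]

lemma quad_zero [FiniteDimensional ℂ V] {U : Submodule ℂ V}
    (hU : Module.finrank ℂ U ≤ 3) {r s r' s' : V}
    (hr : r ∈ U) (hs : s ∈ U) (hr' : r' ∈ U) (hs' : s' ∈ U) :
    ι ℂ r * ι ℂ s * (ι ℂ r' * ι ℂ s') = 0 := by
  have h4 : ¬ LinearIndependent ℂ ![r, s, r', s'] := by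
    intro h
    have hle : Submodule.span ℂ (Set.range ![r, s, r', s']) ≤ U := by
      rw [Submodule.span_le]
      rintro x ⟨i, rfl⟩
      fin_cases i <;> assumption
    have hcard := finrank_span_eq_card h
    have hmono := Submodule.finrank_mono hle
    rw [hcard] at hmono
    simp [Fintype.card_fin] at hmono
    omega
  have h0 := AlternatingMap.map_linearDependent (ιMulti ℂ 4 (M := V)) ![r, s, r', s'] h4
  rw [ιMulti_apply] at h0
  simp only [List.ofFn_succ, List.ofFn_zero, List.prod_cons, List.prod_nil,
    Matrix.cons_val_zero, Matrix.cons_val_one, Matrix.head_cons, mul_one,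
    Matrix.cons_val_succ, Fin.succ] at h0
  rw [show ι ℂ r * ι ℂ s * (ι ℂ r' * ι ℂ s') =
    ι ℂ r * (ι ℂ s * (ι ℂ r' * ι ℂ s')) by rw [mul_assoc]]
  exact h0

lemma pS_mul_zero [FiniteDimensional ℂ V] {U : Submodule ℂ V}
    (hU : Module.finrank ℂ U ≤ 3) {z1 z2 : E} (h1 : z1 ∈ pS U) (h2 : z2 ∈ pS U) :
    z1 * z2 = 0 := by
  induction h1 using Submodule.span_induction with
  | mem w hw =>
    obtain ⟨r, hr, s, hs, rfl⟩ := hw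
    induction h2 using Submodule.span_induction with
    | mem w' hw' =>
      obtain ⟨r', hr', s', hs', rfl⟩ := hw'
      exact quad_zero hU hr hs hr' hs'
    | zero => rw [mul_zero]
    | add a b' ha hb iha ihb => rw [mul_add, iha, ihb, add_zero]
    | smul c a ha iha => rw [mul_smul_comm, iha, smul_zero]
  | zero => rw [zero_mul]
  | add a b' ha hb iha ihb => rw [add_mul, iha, ihb, add_zero]
  | smul c a ha iha => rw [smul_mul_assoc, iha, smul_zero]

lemma mem_span_of_mul_eq_zero (b : Module.Basis (Fin 6) ℂ V) {w : V}
    (h : ι ℂ (b 0) * ι ℂ w = 0) : w ∈ Submodule.span ℂ {b 0} := by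
  set c : Fin 6 → ℂ := fun i => b.repr w i with hc
  have hw : (∑ i, c i • b i) = w := b.sum_repr w
  have expand : ∀ Q : E, (∑ k, c k • (ι ℂ (b 0) * ι ℂ (b k) * Q)) = 0 := by
    intro Q
    have h1 : ι ℂ w = ∑ k, c k • ι ℂ (b k) := by
      rw [← hw, map_sum]
      simp [map_smul]
    calc (∑ k, c k • (ι ℂ (b 0) * ι ℂ (b k) * Q))
        = (ι ℂ (b 0) * ι ℂ w) * Q := by
          rw [h1, Finset.mul_sum, Finset.sum_mul]
          refine Finset.sum_congr rfl fun k _ => ?_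
          rw [mul_smul_comm, smul_mul_assoc]
      _ = 0 := by rw [h, zero_mul]
  have hPl : ∀ (k : Fin 6) (l : List (Fin 6)),
      ι ℂ (b 0) * ι ℂ (b k) * Pl (⇑b) l = Pl (⇑b) (0 :: k :: l) := by
    intro k l; rw [Pl_cons, Pl_cons, mul_assoc]
  have key : ∀ i : Fin 6, i ≠ 0 → c i = 0 := by
    intro i hi
    fin_cases i
    · exact absurd rfl hi
    · have e := expand (Pl (⇑b) [2, 3, 4, 5])
      rw [Fin.sum_univ_six] at e
      simp only [hPl] at e
      rw [Pl_dup (⇑b) (l := [0, 0, 2, 3, 4, 5]) (by decide),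
        Pl_dup (⇑b) (l := [0, 2, 2, 3, 4, 5]) (by decide),
        Pl_dup (⇑b) (l := [0, 3, 2, 3, 4, 5]) (by decide),
        Pl_dup (⇑b) (l := [0, 4, 2, 3, 4, 5]) (by decide),
        Pl_dup (⇑b) (l := [0, 5, 2, 3, 4, 5]) (by decide)] at e
      simp only [smul_zero, zero_add, add_zero] at e
      rcases smul_eq_zero.mp e with h' | h'
      · exact h'
      · exact absurd h' (Pl_perm_ne b (by decide))
    · have e := expand (Pl (⇑b) [1, 3, 4, 5])
      rw [Fin.sum_univ_six] at e
      simp only [hPl] at e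
      rw [Pl_dup (⇑b) (l := [0, 0, 1, 3, 4, 5]) (by decide),
        Pl_dup (⇑b) (l := [0, 1, 1, 3, 4, 5]) (by decide),
        Pl_dup (⇑b) (l := [0, 3, 1, 3, 4, 5]) (by decide),
        Pl_dup (⇑b) (l := [0, 4, 1, 3, 4, 5]) (by decide),
        Pl_dup (⇑b) (l := [0, 5, 1, 3, 4, 5]) (by decide)] at e
      simp only [smul_zero, zero_add, add_zero] at e
      rcases smul_eq_zero.mp e with h' | h'
      · exact h'
      · exact absurd h' (Pl_perm_ne b (by decide))
    · have e := expand (Pl (⇑b) [1, 2, 4, 5])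
      rw [Fin.sum_univ_six] at e
      simp only [hPl] at e
      rw [Pl_dup (⇑b) (l := [0, 0, 1, 2, 4, 5]) (by decide),
        Pl_dup (⇑b) (l := [0, 1, 1, 2, 4, 5]) (by decide),
        Pl_dup (⇑b) (l := [0, 2, 1, 2, 4, 5]) (by decide),
        Pl_dup (⇑b) (l := [0, 4, 1, 2, 4, 5]) (by decide),
        Pl_dup (⇑b) (l := [0, 5, 1, 2, 4, 5]) (by decide)] at e
      simp only [smul_zero, zero_add, add_zero] at e
      rcases smul_eq_zero.mp e with h' | h'
      · exact h'
      · exact absurd h' (Pl_perm_ne b (by decide))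
    · have e := expand (Pl (⇑b) [1, 2, 3, 5])
      rw [Fin.sum_univ_six] at e
      simp only [hPl] at e
      rw [Pl_dup (⇑b) (l := [0, 0, 1, 2, 3, 5]) (by decide),
        Pl_dup (⇑b) (l := [0, 1, 1, 2, 3, 5]) (by decide),
        Pl_dup (⇑b) (l := [0, 2, 1, 2, 3, 5]) (by decide),
        Pl_dup (⇑b) (l := [0, 3, 1, 2, 3, 5]) (by decide),
        Pl_dup (⇑b) (l := [0, 5, 1, 2, 3, 5]) (by decide)] at e
      simp only [smul_zero, zero_add, add_zero] at e
      rcases smul_eq_zero.mp e with h' | h'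
      · exact h'
      · exact absurd h' (Pl_perm_ne b (by decide))
    · have e := expand (Pl (⇑b) [1, 2, 3, 4])
      rw [Fin.sum_univ_six] at e
      simp only [hPl] at e
      rw [Pl_dup (⇑b) (l := [0, 0, 1, 2, 3, 4]) (by decide),
        Pl_dup (⇑b) (l := [0, 1, 1, 2, 3, 4]) (by decide),
        Pl_dup (⇑b) (l := [0, 2, 1, 2, 3, 4]) (by decide),
        Pl_dup (⇑b) (l := [0, 3, 1, 2, 3, 4]) (by decide),
        Pl_dup (⇑b) (l := [0, 4, 1, 2, 3, 4]) (by decide)] at e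
      simp only [smul_zero, zero_add, add_zero] at e
      rcases smul_eq_zero.mp e with h' | h'
      · exact h'
      · exact absurd h' (Pl_perm_ne b (by decide))
  rw [← hw]
  refine Submodule.sum_mem _ fun i _ => ?_
  by_cases hi : i = 0
  · subst hi
    exact Submodule.smul_mem _ _ (Submodule.subset_span rfl)
  · rw [key i hi, zero_smul]
    exact Submodule.zero_mem _

end Stmt5Aux

open Stmt5Aux

set_option maxHeartbeats 1000000 in
/-- for a 6-dimensional complex `V` and `ω = α∧σ` with `α ≠ 0` and
`α∧σ∧σ ≠ 0`, the kernel of `v ↦ v∧ω` is exactly the line `ℂα`, and the kernel of the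
contraction `f ↦ f⌟ω` on `V*` is one-dimensional.  Here `K` is the contraction operation,
characterized on decomposables by `f⌟(u∧v∧w) = f(u) v∧w − f(v) u∧w + f(w) u∧v`. -/
theorem stmt5 {V : Type*} [AddCommGroup V] [Module ℂ V] [FiniteDimensional ℂ V]
    (hV : Module.finrank ℂ V = 6)
    (K : Module.Dual ℂ V →ₗ[ℂ] ExteriorAlgebra ℂ V →ₗ[ℂ] ExteriorAlgebra ℂ V)
    (hK : ∀ (f : Module.Dual ℂ V) (u v w : V),
      K f (ι ℂ u * ι ℂ v * ι ℂ w) =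
        f u • (ι ℂ v * ι ℂ w) - f v • (ι ℂ u * ι ℂ w) + f w • (ι ℂ u * ι ℂ v))
    (α : V) (hα : α ≠ 0) (σ : ExteriorAlgebra ℂ V) (hσmem : σ ∈ ⋀[ℂ]^2 V)
    (ω : ExteriorAlgebra ℂ V) (hω : ω = ι ℂ α * σ)
    (hασσ : ι ℂ α * σ * σ ≠ 0) :
    (∀ v : V, ι ℂ v * ω = 0 ↔ v ∈ Submodule.span ℂ {α}) ∧
    (∃ f : Module.Dual ℂ V, f ≠ 0 ∧
      ∀ g : Module.Dual ℂ V, K g ω = 0 ↔ ∃ c : ℂ, g = c • f) := by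
  obtain ⟨b, hb0⟩ := exists_basis hV hα
  have hσT : σ ∈ pS (⊤ : Submodule ℂ V) := sq_mem_pS hσmem
  set mm : Module.Dual ℂ V →ₗ[ℂ] V :=
    ExteriorAlgebra.ιInv.comp (ctrL.flip σ) with hmmdef
  have hmm : ∀ g : Module.Dual ℂ V, ι ℂ (mm g) = ctrL g σ := by
    intro g
    obtain ⟨x, hx⟩ := ctr_sq_mem_range hσmem g
    have hx2 : mm g = x := by
      rw [hmmdef]
      show ExteriorAlgebra.ιInv (ctrL g σ) = x
      rw [← hx]
      exact ExteriorAlgebra.ι_leftInverse x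
    rw [hx2, hx]
  have hKω : ∀ g : Module.Dual ℂ V, K g ω = g α • σ - ι ℂ α * ι ℂ (mm g) := by
    intro g
    have hmain : ∀ z ∈ LinearMap.range (ι ℂ : V →ₗ[ℂ] ExteriorAlgebra ℂ V) *
        LinearMap.range (ι ℂ : V →ₗ[ℂ] ExteriorAlgebra ℂ V),
        K g (ι ℂ α * z) = ctrL g (ι ℂ α * z) := by
      intro z hz
      refine Submodule.mul_induction_on hz ?_ ?_
      · rintro x ⟨u, rfl⟩ y ⟨v, rfl⟩
        conv_lhs => rw [← mul_assoc, hK g α u v]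
        rw [ctrL_ι_mul, ctrL_ι_mul, ctrL_ι, Algebra.algebraMap_eq_smul_one]
        simp only [mul_sub, mul_smul_comm, mul_one, smul_sub, smul_smul]
        abel
      · intro x y hx hy
        rw [mul_add, map_add, map_add, hx, hy]
    have h2 : σ ∈ LinearMap.range (ι ℂ : V →ₗ[ℂ] ExteriorAlgebra ℂ V) *
        LinearMap.range (ι ℂ : V →ₗ[ℂ] ExteriorAlgebra ℂ V) := by
      rw [← pow_two]; exact hσmem
    rw [hω, hmain σ h2, ctrL_ι_mul, ← hmm g]
  have hπ1 : ∀ v : V, ι ℂ v * ω = 0 ↔ v ∈ Submodule.span ℂ {α} := by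
    intro v
    constructor
    · intro hv0
      by_contra hns
      have hvQ : Submodule.Quotient.mk (p := Submodule.span ℂ {α}) v ≠ 0 := by
        simpa [Submodule.Quotient.mk_eq_zero] using hns
      obtain ⟨q, hq⟩ := dual_one hvQ
      set g : Module.Dual ℂ V := q.comp (Submodule.span ℂ {α}).mkQ with hgdef
      have hgα : g α = 0 := by
        have hmk : (Submodule.span ℂ {α}).mkQ α = 0 := by
          rw [Submodule.mkQ_apply, Submodule.Quotient.mk_eq_zero]
          exact Submodule.mem_span_singleton_self α
        rw [hgdef, LinearMap.comp_apply, hmk, map_zero]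
      have hgv : g v = 1 := hq
      rw [hω] at hv0
      have h2 : ctrL g (ι ℂ v * (ι ℂ α * σ)) = 0 := by rw [hv0, map_zero]
      rw [ctrL_ι_mul, ctrL_ι_mul, ← hmm g, hgα, hgv, zero_smul, zero_sub, one_smul,
        mul_neg, sub_neg_eq_add] at h2
      have hEq : ι ℂ α * σ = -(ι ℂ v * (ι ℂ α * ι ℂ (mm g))) :=
        eq_neg_of_add_eq_zero_left h2
      apply hασσ
      calc ι ℂ α * σ * σ = -(ι ℂ v * (ι ℂ α * ι ℂ (mm g))) * σ := by rw [hEq]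
        _ = -(ι ℂ v * (ι ℂ α * (ι ℂ (mm g) * σ))) := by
            rw [neg_mul, mul_assoc, mul_assoc]
        _ = -(ι ℂ v * (ι ℂ α * (σ * ι ℂ (mm g)))) := by rw [comm_pS hσT (mm g)]
        _ = -(ι ℂ v * (ι ℂ α * σ) * ι ℂ (mm g)) := by
            rw [← mul_assoc (ι ℂ α), mul_assoc (ι ℂ v)]
        _ = 0 := by rw [hv0, zero_mul, neg_zero]
    · intro hv
      obtain ⟨c, rfl⟩ := Submodule.mem_span_singleton.mp hv
      rw [hω, map_smul, smul_mul_assoc, ← mul_assoc, ι_sq_zero, zero_mul, smul_zero]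
  refine ⟨hπ1, ?_⟩
  have hskew : ∀ g h : Module.Dual ℂ V, g (mm h) = - h (mm g) := by
    intro g h
    have h3 := CliffordAlgebra.contractLeft_comm g h σ
    have e1 : ctrL g (ctrL h σ) = algebraMap ℂ (ExteriorAlgebra ℂ V) (g (mm h)) := by
      rw [← hmm h, ctrL_ι]
    have e2 : ctrL h (ctrL g σ) = algebraMap ℂ (ExteriorAlgebra ℂ V) (h (mm g)) := by
      rw [← hmm g, ctrL_ι]
    have h3' : algebraMap ℂ (ExteriorAlgebra ℂ V) (g (mm h)) =
        algebraMap ℂ (ExteriorAlgebra ℂ V) (-(h (mm g))) := by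
      rw [← e1, map_neg, ← e2]
      exact h3
    exact (ExteriorAlgebra.algebraMap_inj V _ _).mp h3'
  set G : Fin 5 → Module.Dual ℂ V := fun j => b.coord j.succ with hGdef
  have hGα : ∀ j, G j α = 0 := by
    intro j
    rw [← hb0]
    simp [hGdef, Module.Basis.coord_apply, Module.Basis.repr_self, Finsupp.single_apply,
      (Fin.succ_ne_zero j).symm]
  have hGb : ∀ j k : Fin 5, G j (b k.succ) = if k = j then 1 else 0 := by
    intro j k
    simp [hGdef, Module.Basis.coord_apply, Module.Basis.repr_self, Finsupp.single_apply, Fin.succ_inj]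
  set M5 : Matrix (Fin 5) (Fin 5) ℂ := Matrix.of fun i j => G i (mm (G j)) with hM5def
  have hdet : M5.det = 0 := by
    have hT : M5.transpose = -M5 := by
      ext i j
      show G j (mm (G i)) = -(G i (mm (G j)))
      exact hskew (G j) (G i)
    have h1 : M5.det = -M5.det := by
      conv_lhs => rw [← Matrix.det_transpose, hT]
      rw [Matrix.det_neg]
      norm_num
    have h2 : (2 : ℂ) * M5.det = 0 := by linear_combination h1
    have h3 : (2 : ℂ) ≠ 0 := by norm_num
    exact (mul_eq_zero.mp h2).resolve_left h3
  obtain ⟨cv, hcv0, hcv⟩ := Matrix.exists_mulVec_eq_zero_iff.mpr hdet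
  set f : Module.Dual ℂ V := ∑ j, cv j • G j with hfdef
  have hfα : f α = 0 := by
    rw [hfdef]
    simp [LinearMap.sum_apply, LinearMap.smul_apply, hGα]
  have hfb : ∀ k : Fin 5, f (b k.succ) = cv k := by
    intro k
    rw [hfdef]
    simp only [LinearMap.sum_apply, LinearMap.smul_apply, hGb, smul_eq_mul,
      mul_ite, mul_one, mul_zero]
    simp
  have hfne : f ≠ 0 := by
    obtain ⟨j, hj⟩ := Function.ne_iff.mp hcv0
    intro h0
    apply hj
    have h4 := hfb j
    rw [h0] at h4
    simpa using h4.symm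
  have hmf : mm f ∈ Submodule.span ℂ {α} := by
    have hco : ∀ i : Fin 5, b.repr (mm f) i.succ = 0 := by
      intro i
      have e1 : mm f = ∑ j, cv j • mm (G j) := by
        rw [hfdef, map_sum]
        simp [map_smul]
      have e2 : G i (mm f) = ∑ j, M5 i j * cv j := by
        rw [e1, map_sum]
        refine Finset.sum_congr rfl fun j _ => ?_
        rw [map_smul, smul_eq_mul]
        rw [mul_comm]
        rfl
      have e3 : (∑ j, M5 i j * cv j) = 0 := by
        have h5 := congrFun hcv i
        simpa [Matrix.mulVec, dotProduct] using h5
      have e4 : G i (mm f) = 0 := by rw [e2, e3]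
      simpa [hGdef, Module.Basis.coord_apply] using e4
    have hrepr := b.sum_repr (mm f)
    rw [Fin.sum_univ_succ] at hrepr
    rw [← hrepr]
    refine Submodule.add_mem _ ?_ ?_
    · rw [hb0]
      exact Submodule.smul_mem _ _ (Submodule.mem_span_singleton_self α)
    · refine Submodule.sum_mem _ fun i _ => ?_
      rw [hco i, zero_smul]
      exact Submodule.zero_mem _
  have hKf : K f ω = 0 := by
    obtain ⟨cf, hcf⟩ := Submodule.mem_span_singleton.mp hmf
    rw [hKω f, hfα, zero_smul, zero_sub, neg_eq_zero, ← hcf, map_smul, mul_smul_comm,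
      ι_sq_zero, smul_zero]
  refine ⟨f, hfne, fun g => ⟨?_, ?_⟩⟩
  · intro hg0
    rw [hKω g] at hg0
    have hEq : g α • σ = ι ℂ α * ι ℂ (mm g) := sub_eq_zero.mp hg0
    have hgα : g α = 0 := by
      by_contra hne
      have h6 := congrArg (fun z => ι ℂ α * z) hEq
      simp only [mul_smul_comm, ← mul_assoc, ι_sq_zero, zero_mul] at h6
      have h7 : ι ℂ α * σ = 0 := by
        rcases smul_eq_zero.mp h6 with h | h
        · exact absurd h hne
        · exact h
      exact hασσ (by rw [h7, zero_mul])
    have hwz : ι ℂ α * ι ℂ (mm g) = 0 := by rw [← hEq, hgα, zero_smul]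
    have hmg : mm g ∈ Submodule.span ℂ {α} := by
      have h7 := mem_span_of_mul_eq_zero b (w := mm g) (by rw [hb0]; exact hwz)
      rwa [hb0] at h7
    by_contra hgns
    have hgspan : g ∉ Submodule.span ℂ {f} := by
      intro hmem
      obtain ⟨c, hcc⟩ := Submodule.mem_span_singleton.mp hmem
      exact hgns ⟨c, hcc.symm⟩
    have hgne : g ≠ 0 := by
      rintro rfl
      exact hgns ⟨0, by simp⟩
    obtain ⟨p0, hp0⟩ := dual_one hα
    have hufind : ∃ x, g x = 0 ∧ f x ≠ 0 := by
      by_contra hno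
      push_neg at hno
      obtain ⟨x0, hx0⟩ : ∃ x0, g x0 ≠ 0 := by
        by_contra hz
        push_neg at hz
        exact hgne (LinearMap.ext fun x => hz x)
      obtain ⟨c0, hfg⟩ : ∃ c0 : ℂ, f = c0 • g := by
        refine ⟨f x0 / g x0, ?_⟩
        ext z
        have h7 := hno (z - (g z / g x0) • x0) (by
          rw [map_sub, map_smul, smul_eq_mul, div_mul_cancel₀ _ hx0, sub_self])
        rw [map_sub, map_smul, smul_eq_mul] at h7
        have h8 := sub_eq_zero.mp h7
        rw [LinearMap.smul_apply, smul_eq_mul, h8]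
        ring
      have hc0 : c0 ≠ 0 := by
        intro hz
        rw [hz, zero_smul] at hfg
        exact hfne hfg
      apply hgspan
      rw [Submodule.mem_span_singleton]
      exact ⟨c0⁻¹, by rw [hfg, smul_smul, inv_mul_cancel₀ hc0, one_smul]⟩
    obtain ⟨x, hgx, hfx⟩ := hufind
    have hwfind : ∃ z, f z = 0 ∧ g z ≠ 0 := by
      by_contra hno
      push_neg at hno
      obtain ⟨x1, hx1⟩ : ∃ x1, f x1 ≠ 0 := by
        by_contra hz
        push_neg at hz
        exact hfne (LinearMap.ext fun x' => hz x')
      have hfg : g = (g x1 / f x1) • f := by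
        ext z
        have h7 := hno (z - (f z / f x1) • x1) (by
          rw [map_sub, map_smul, smul_eq_mul, div_mul_cancel₀ _ hx1, sub_self])
        rw [map_sub, map_smul, smul_eq_mul] at h7
        have h8 := sub_eq_zero.mp h7
        rw [LinearMap.smul_apply, smul_eq_mul, h8]
        ring
      apply hgspan
      rw [Submodule.mem_span_singleton]
      exact ⟨g x1 / f x1, hfg.symm⟩
    obtain ⟨y, hfy, hgy⟩ := hwfind
    obtain ⟨u, hfu, hgu, hp0u⟩ : ∃ u : V, f u = 1 ∧ g u = 0 ∧ p0 u = 0 := by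
      refine ⟨(f x)⁻¹ • x - ((f x)⁻¹ * p0 x) • α, ?_, ?_, ?_⟩
      · rw [map_sub, map_smul, map_smul, smul_eq_mul, smul_eq_mul, hfα,
          inv_mul_cancel₀ hfx]
        ring
      · rw [map_sub, map_smul, map_smul, smul_eq_mul, smul_eq_mul, hgα, hgx]
        ring
      · rw [map_sub, map_smul, map_smul, smul_eq_mul, smul_eq_mul, hp0]
        ring
    obtain ⟨w, hgw, hfw, hp0w⟩ : ∃ w : V, g w = 1 ∧ f w = 0 ∧ p0 w = 0 := by
      refine ⟨(g y)⁻¹ • y - ((g y)⁻¹ * p0 y) • α, ?_, ?_, ?_⟩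
      · rw [map_sub, map_smul, map_smul, smul_eq_mul, smul_eq_mul, hgα,
          inv_mul_cancel₀ hgy]
        ring
      · rw [map_sub, map_smul, map_smul, smul_eq_mul, smul_eq_mul, hfα, hfy]
        ring
      · rw [map_sub, map_smul, map_smul, smul_eq_mul, smul_eq_mul, hp0]
        ring
    obtain ⟨β, y1, hy1, hσ1⟩ := dec (T := (⊤ : Submodule ℂ V)) (T' := LinearMap.ker p0)
      α p0 (fun z _ => by
        rw [LinearMap.mem_ker, map_sub, map_smul, smul_eq_mul, hp0]
        ring) hσT
    obtain ⟨γ, y2, hy2, hσ2⟩ := dec (T := LinearMap.ker p0)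
      (T' := LinearMap.ker p0 ⊓ LinearMap.ker f) u f (fun z hz => by
        rw [LinearMap.mem_ker] at hz
        refine Submodule.mem_inf.mpr ⟨?_, ?_⟩
        · rw [LinearMap.mem_ker, map_sub, map_smul, smul_eq_mul, hz, hp0u]
          ring
        · rw [LinearMap.mem_ker, map_sub, map_smul, smul_eq_mul, hfu]
          ring) hy1
    obtain ⟨δ, τ, hτ, hσ3⟩ := dec (T := LinearMap.ker p0 ⊓ LinearMap.ker f)
      (T' := LinearMap.ker p0 ⊓ LinearMap.ker f ⊓ LinearMap.ker g) w g (fun z hz => by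
        obtain ⟨hz1, hz2⟩ := Submodule.mem_inf.mp hz
        rw [LinearMap.mem_ker] at hz1 hz2
        refine Submodule.mem_inf.mpr ⟨Submodule.mem_inf.mpr ⟨?_, ?_⟩, ?_⟩
        · rw [LinearMap.mem_ker, map_sub, map_smul, smul_eq_mul, hz1, hp0w]
          ring
        · rw [LinearMap.mem_ker, map_sub, map_smul, smul_eq_mul, hz2, hfw]
          ring
        · rw [LinearMap.mem_ker, map_sub, map_smul, smul_eq_mul, hgw]
          ring) hy2
    have hU3 : Module.finrank ℂ
        ((LinearMap.ker p0 ⊓ LinearMap.ker f ⊓ LinearMap.ker g : Submodule ℂ V) :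
          Type _) ≤ 3 := by
      set Φ : V →ₗ[ℂ] (Fin 3 → ℂ) := LinearMap.pi ![p0, f, g] with hΦdef
      have hkerΦ : LinearMap.ker Φ =
          LinearMap.ker p0 ⊓ LinearMap.ker f ⊓ LinearMap.ker g := by
        ext z
        constructor
        · intro hz
          have h0 := congrFun (LinearMap.mem_ker.mp hz) 0
          have h1 := congrFun (LinearMap.mem_ker.mp hz) 1
          have h2 := congrFun (LinearMap.mem_ker.mp hz) 2
          simp [hΦdef, LinearMap.pi_apply] at h0 h1 h2
          exact Submodule.mem_inf.mpr ⟨Submodule.mem_inf.mpr ⟨h0, h1⟩, h2⟩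
        · intro hz
          obtain ⟨hz01, h2⟩ := Submodule.mem_inf.mp hz
          obtain ⟨h0, h1⟩ := Submodule.mem_inf.mp hz01
          rw [LinearMap.mem_ker] at h0 h1 h2 ⊢
          funext i
          fin_cases i <;> simp [hΦdef, LinearMap.pi_apply, h0, h1, h2]
      have hsurj : LinearMap.range Φ = ⊤ := by
        rw [LinearMap.range_eq_top]
        intro cvec
        refine ⟨cvec 0 • α + cvec 1 • u + cvec 2 • w, ?_⟩
        funext i
        fin_cases i <;>
          simp [hΦdef, LinearMap.pi_apply, map_add, map_smul, smul_eq_mul, hp0, hp0u,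
            hp0w, hfα, hfu, hfw, hgα, hgu, hgw]
      have hrn := LinearMap.finrank_range_add_finrank_ker Φ
      rw [hsurj, finrank_top, hkerΦ, hV, Module.finrank_fintype_fun_eq_card] at hrn
      simp [Fintype.card_fin] at hrn
      omega
    obtain ⟨cf, hcf⟩ := Submodule.mem_span_singleton.mp hmf
    obtain ⟨cg, hcg⟩ := Submodule.mem_span_singleton.mp hmg
    have hσfull : σ = ι ℂ α * ι ℂ β + (ι ℂ u * ι ℂ γ + (ι ℂ w * ι ℂ δ + τ)) := by
      rw [hσ1, hσ2, hσ3]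
    have hUf : ∀ z ∈ (LinearMap.ker p0 ⊓ LinearMap.ker f ⊓ LinearMap.ker g :
        Submodule ℂ V), f z = 0 := fun z hz =>
      LinearMap.mem_ker.mp (Submodule.mem_inf.mp (Submodule.mem_inf.mp hz).1).2
    have hUg : ∀ z ∈ (LinearMap.ker p0 ⊓ LinearMap.ker f ⊓ LinearMap.ker g :
        Submodule ℂ V), g z = 0 := fun z hz =>
      LinearMap.mem_ker.mp (Submodule.mem_inf.mp hz).2
    have hcf2 : ctrL f σ = cf • ι ℂ α := by rw [← hmm f, ← hcf, map_smul]
    have hcg2 : ctrL g σ = cg • ι ℂ α := by rw [← hmm g, ← hcg, map_smul]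
    have hfσ : ctrL f σ =
        (ι ℂ γ - f β • ι ℂ α) - (f γ • ι ℂ u + f δ • ι ℂ w) := by
      rw [hσfull, map_add, map_add, map_add, ctrL_ι_mul, ctrL_ι_mul, ctrL_ι_mul,
        ctrL_ι, ctrL_ι, ctrL_ι, ctrL_pS_zero f hUf hτ, hfα, hfu, hfw,
        Algebra.algebraMap_eq_smul_one, Algebra.algebraMap_eq_smul_one,
        Algebra.algebraMap_eq_smul_one]
      simp only [zero_smul, one_smul, add_zero, mul_smul_comm, mul_one, zero_sub]
      module
    have hgσ : ctrL g σ =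
        (ι ℂ δ - g β • ι ℂ α) - (g γ • ι ℂ u + g δ • ι ℂ w) := by
      rw [hσfull, map_add, map_add, map_add, ctrL_ι_mul, ctrL_ι_mul, ctrL_ι_mul,
        ctrL_ι, ctrL_ι, ctrL_ι, ctrL_pS_zero g hUg hτ, hgα, hgu, hgw,
        Algebra.algebraMap_eq_smul_one, Algebra.algebraMap_eq_smul_one,
        Algebra.algebraMap_eq_smul_one]
      simp only [zero_smul, one_smul, add_zero, mul_smul_comm, mul_one, zero_sub]
      module
    have hγι : ι ℂ γ = (cf + f β) • ι ℂ α + (f γ • ι ℂ u + f δ • ι ℂ w) := by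
      have h9 := hfσ.symm.trans hcf2
      have h9' := eq_add_of_sub_eq h9
      have h9'' := eq_add_of_sub_eq h9'
      rw [h9'']
      module
    have hδι : ι ℂ δ = (cg + g β) • ι ℂ α + (g γ • ι ℂ u + g δ • ι ℂ w) := by
      have h9 := hgσ.symm.trans hcg2
      have h9' := eq_add_of_sub_eq h9
      have h9'' := eq_add_of_sub_eq h9'
      rw [h9'']
      module
    set a1 := f γ with ha1def
    set a2 := f δ with ha2def
    set a3 := g γ with ha3def
    set a4 := g δ with ha4def
    have hγ : γ = (cf + f β) • α + (a1 • u + a2 • w) := by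
      refine (ExteriorAlgebra.ι_inj ℂ _ _).mp ?_
      rw [map_add, map_add, map_smul, map_smul, map_smul]
      exact hγι
    have hδ : δ = (cg + g β) • α + (a3 • u + a4 • w) := by
      refine (ExteriorAlgebra.ι_inj ℂ _ _).mp ?_
      rw [map_add, map_add, map_smul, map_smul, map_smul]
      exact hδι
    have hgγ : a3 = a2 := by
      have h10 := congrArg g hγ
      rw [map_add, map_add, map_smul, map_smul, map_smul, smul_eq_mul, smul_eq_mul,
        smul_eq_mul, hgα, hgu, hgw] at h10
      rw [ha3def]
      simpa using h10
    have hσfin : σ = ι ℂ α * ι ℂ (β - (cf + f β) • u - (cg + g β) • w) + τ := by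
      rw [hσfull, hγ, hδ]
      have e1 : ι ℂ u * ι ℂ ((cf + f β) • α + (a1 • u + a2 • w)) =
          -((cf + f β) • (ι ℂ α * ι ℂ u)) + a2 • (ι ℂ u * ι ℂ w) := by
        rw [map_add, map_add, map_smul, map_smul, map_smul, mul_add, mul_add,
          mul_smul_comm, mul_smul_comm, mul_smul_comm, ι_sq_zero, smul_zero, swap_ι u α]
        module
      have e2 : ι ℂ w * ι ℂ ((cg + g β) • α + (a3 • u + a4 • w)) =
          -((cg + g β) • (ι ℂ α * ι ℂ w)) + a3 • (ι ℂ w * ι ℂ u) := by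
        rw [map_add, map_add, map_smul, map_smul, map_smul, mul_add, mul_add,
          mul_smul_comm, mul_smul_comm, mul_smul_comm, ι_sq_zero, smul_zero, swap_ι w α]
        module
      rw [e1, e2, hgγ, swap_ι w u, map_sub, map_sub, map_smul, map_smul, mul_sub,
        mul_sub, mul_smul_comm, mul_smul_comm]
      module
    have hfinal : ι ℂ α * σ * σ = 0 := by
      conv_lhs => rw [hσfin]
      have hx1 : ι ℂ α * (ι ℂ α * ι ℂ (β - (cf + f β) • u - (cg + g β) • w) + τ) =
          ι ℂ α * τ := by
        rw [mul_add, ← mul_assoc, ι_sq_zero, zero_mul, zero_add]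
      rw [hx1, mul_add]
      have h7 : ι ℂ α * τ * (ι ℂ α * ι ℂ (β - (cf + f β) • u - (cg + g β) • w)) = 0 := by
        rw [show ι ℂ α * τ = τ * ι ℂ α from comm_pS hτ α, mul_assoc,
          ← mul_assoc (ι ℂ α), ι_sq_zero, zero_mul, mul_zero]
      have h8 : ι ℂ α * τ * τ = 0 := by
        rw [mul_assoc, pS_mul_zero hU3 hτ hτ, mul_zero]
      rw [h7, h8, add_zero]
    exact hασσ hfinal
  · rintro ⟨c, rfl⟩
    rw [map_smul, LinearMap.smul_apply, hKf, smul_zero]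
end

section
/- Let V be a 6-dimensional complex vector space and ω ∈ O₅, with kernel line α_ω of ∧ω and associated hyperplane A_ω. Then: (i) α_ω ⊆ A_ω; (ii) A_ω is the smallest linear subspace W of V such that ω lies in the image of ⋀³W in ⋀³V; and (iii) there exists a non-decomposable σ ∈ ⋀²A_ω such that ω = α∧σ, where α spans α_ω. -/
open ExteriorAlgebra

/-- Membership in the Segre orbit `O₅`: a degree-3 element that is not decomposable and is
annihilated by wedging with some nonzero vector. -/
def InO5 {V : Type*} [AddCommGroup V] [Module ℂ V] (ω : ExteriorAlgebra ℂ V) : Prop :=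
  ω ∈ ⋀[ℂ]^3 V ∧ (¬ ∃ a b c : V, ω = ι ℂ a * ι ℂ b * ι ℂ c) ∧
    ∃ v : V, v ≠ 0 ∧ ι ℂ v * ω = 0

/-- The image of `⋀³W` in `⋀³V` for a subspace `W ⊆ V`: the span of triple wedges of
elements of `W`. -/
def wedgeCube {V : Type*} [AddCommGroup V] [Module ℂ V] (W : Submodule ℂ V) :
    Submodule ℂ (ExteriorAlgebra ℂ V) :=
  Submodule.span ℂ {x | ∃ u v w : V, u ∈ W ∧ v ∈ W ∧ w ∈ W ∧ x = ι ℂ u * ι ℂ v * ι ℂ w}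

/-- The image of `⋀²W` in `⋀²V` for a subspace `W ⊆ V`. -/
def wedgeSquare {V : Type*} [AddCommGroup V] [Module ℂ V] (W : Submodule ℂ V) :
    Submodule ℂ (ExteriorAlgebra ℂ V) :=
  Submodule.span ℂ {x | ∃ u v : V, u ∈ W ∧ v ∈ W ∧ x = ι ℂ u * ι ℂ v}


section Auxiliary

variable {V : Type*} [AddCommGroup V] [Module ℂ V]

noncomputable def ctr (g : Module.Dual ℂ V) : ExteriorAlgebra ℂ V →ₗ[ℂ] ExteriorAlgebra ℂ V :=
  CliffordAlgebra.contractLeft g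

lemma ctr_ι_mul (g : Module.Dual ℂ V) (a : V) (x : ExteriorAlgebra ℂ V) :
    ctr g (ι ℂ a * x) = g a • x - ι ℂ a * ctr g x :=
  CliffordAlgebra.contractLeft_ι_mul (Q := (0 : QuadraticForm ℂ V)) (d := g) a x

lemma ctr_ι (g : Module.Dual ℂ V) (a : V) :
    ctr g (ι ℂ a) = algebraMap ℂ _ (g a) :=
  CliffordAlgebra.contractLeft_ι (0 : QuadraticForm ℂ V) (d := g) a

lemma ι_anticomm (a b : V) : ι ℂ a * ι ℂ b = -(ι ℂ b * ι ℂ a) := by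
  have h := ι_sq_zero (R := ℂ) (a + b)
  rw [map_add, add_mul, mul_add, mul_add, ι_sq_zero, ι_sq_zero] at h
  linear_combination (norm := noncomm_ring) h

lemma swL (a b c : V) : ι ℂ a * ι ℂ b * ι ℂ c = -(ι ℂ b * ι ℂ a * ι ℂ c) := by
  rw [ι_anticomm a b, neg_mul]

lemma swR (a b c : V) : ι ℂ a * ι ℂ b * ι ℂ c = -(ι ℂ a * ι ℂ c * ι ℂ b) := by
  rw [mul_assoc, ι_anticomm b c, mul_neg, mul_assoc]

lemma swO (a b c : V) : ι ℂ a * ι ℂ b * ι ℂ c = -(ι ℂ c * ι ℂ b * ι ℂ a) := by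
  rw [swR a b c, swL a c b, swR c a b, neg_neg]

lemma tz2 (a b : V) : ι ℂ a * ι ℂ a * ι ℂ b = 0 := by rw [ι_sq_zero, zero_mul]

lemma tz3 (a b : V) : ι ℂ a * ι ℂ b * ι ℂ b = 0 := by rw [mul_assoc, ι_sq_zero, mul_zero]

lemma tz1 (a b : V) : ι ℂ a * ι ℂ b * ι ℂ a = 0 := by rw [swR, tz2, neg_zero]

lemma comm2' (a b c : V) : ι ℂ a * ι ℂ b * ι ℂ c = ι ℂ c * (ι ℂ a * ι ℂ b) := by
  rw [swR, swL a c b, neg_neg, mul_assoc]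

lemma ctr_triple (g : Module.Dual ℂ V) (u v w : V) :
    ctr g (ι ℂ u * ι ℂ v * ι ℂ w) =
      g u • (ι ℂ v * ι ℂ w) - g v • (ι ℂ u * ι ℂ w) + g w • (ι ℂ u * ι ℂ v) := by
  rw [mul_assoc, ctr_ι_mul, ctr_ι_mul, ctr_ι, mul_sub, mul_smul_comm,
    ← Algebra.commutes, ← Algebra.smul_def, mul_smul_comm]
  abel

lemma sq_mem {P : Submodule ℂ V} {u v : V} (hu : u ∈ P) (hv : v ∈ P) :
    ι ℂ u * ι ℂ v ∈ wedgeSquare P :=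
  Submodule.subset_span ⟨u, v, hu, hv, rfl⟩

lemma cube_mem {P : Submodule ℂ V} {u v w : V} (hu : u ∈ P) (hv : v ∈ P) (hw : w ∈ P) :
    ι ℂ u * ι ℂ v * ι ℂ w ∈ wedgeCube P :=
  Submodule.subset_span ⟨u, v, w, hu, hv, hw, rfl⟩

lemma wedgeCube_mono {P Q : Submodule ℂ V} (h : P ≤ Q) : wedgeCube P ≤ wedgeCube Q := by
  apply Submodule.span_le.2
  rintro x ⟨u, v, w, hu, hv, hw, rfl⟩
  exact cube_mem (h hu) (h hv) (h hw)

lemma wedgeSquare_mono {P Q : Submodule ℂ V} (h : P ≤ Q) : wedgeSquare P ≤ wedgeSquare Q := by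
  apply Submodule.span_le.2
  rintro x ⟨u, v, hu, hv, rfl⟩
  exact sq_mem (h hu) (h hv)

/-- 2-forms commute with vectors. -/
lemma comm2 {P : Submodule ℂ V} {τ : ExteriorAlgebra ℂ V} (hτ : τ ∈ wedgeSquare P) (c : V) :
    τ * ι ℂ c = ι ℂ c * τ := by
  induction hτ using Submodule.span_induction with
  | mem x hx => obtain ⟨u, v, hu, hv, rfl⟩ := hx; exact comm2' u v c
  | zero => simp
  | add x y _ _ hx hy => rw [add_mul, mul_add, hx, hy]
  | smul a x _ hx => rw [smul_mul_assoc, mul_smul_comm, hx]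

lemma sq_mul_mem {P : Submodule ℂ V} {τ : ExteriorAlgebra ℂ V} (hτ : τ ∈ wedgeSquare P)
    {c : V} (hc : c ∈ P) : τ * ι ℂ c ∈ wedgeCube P := by
  induction hτ using Submodule.span_induction with
  | mem x hx => obtain ⟨u, v, hu, hv, rfl⟩ := hx; exact cube_mem hu hv hc
  | zero => simp
  | add x y _ _ hx hy => rw [add_mul]; exact Submodule.add_mem _ hx hy
  | smul a x _ hx => rw [smul_mul_assoc]; exact Submodule.smul_mem _ _ hx

lemma ctr_sq_zero {P : Submodule ℂ V} {g : Module.Dual ℂ V} (hg : ∀ u ∈ P, g u = 0)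
    {τ : ExteriorAlgebra ℂ V} (hτ : τ ∈ wedgeSquare P) : ctr g τ = 0 := by
  induction hτ using Submodule.span_induction with
  | mem x hx =>
    obtain ⟨u, v, hu, hv, rfl⟩ := hx
    rw [ctr_ι_mul, ctr_ι, hg u hu, hg v hv, map_zero, mul_zero, zero_smul, sub_zero]
  | zero => simp
  | add x y _ _ hx hy => rw [map_add, hx, hy, add_zero]
  | smul a x _ hx => rw [map_smul, hx, smul_zero]

lemma ctr_cube_zero {P : Submodule ℂ V} {g : Module.Dual ℂ V} (hg : ∀ u ∈ P, g u = 0)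
    {τ : ExteriorAlgebra ℂ V} (hτ : τ ∈ wedgeCube P) : ctr g τ = 0 := by
  induction hτ using Submodule.span_induction with
  | mem x hx =>
    obtain ⟨u, v, w, hu, hv, hw, rfl⟩ := hx
    rw [ctr_triple, hg u hu, hg v hv, hg w hw]; simp
  | zero => simp
  | add x y _ _ hx hy => rw [map_add, hx, hy, add_zero]
  | smul a x _ hx => rw [map_smul, hx, smul_zero]

lemma ctr_cube_mem {P : Submodule ℂ V} (g : Module.Dual ℂ V)
    {x : ExteriorAlgebra ℂ V} (hx : x ∈ wedgeCube P) : ctr g x ∈ wedgeSquare P := by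
  induction hx using Submodule.span_induction with
  | mem x hx =>
    obtain ⟨u, v, w, hu, hv, hw, rfl⟩ := hx
    rw [ctr_triple]
    exact Submodule.add_mem _
      (Submodule.sub_mem _ (Submodule.smul_mem _ _ (sq_mem hv hw))
        (Submodule.smul_mem _ _ (sq_mem hu hw)))
      (Submodule.smul_mem _ _ (sq_mem hu hv))
  | zero => simp
  | add x y _ _ hx hy => rw [map_add]; exact Submodule.add_mem _ hx hy
  | smul a x _ hx => rw [map_smul]; exact Submodule.smul_mem _ _ hx

/-- Square decomposition. -/
lemma W2 {U : Submodule ℂ V} {g : Module.Dual ℂ V} {e : V} (he : e ∈ U) (hge : g e = 1)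
    {x : ExteriorAlgebra ℂ V} (hx : x ∈ wedgeSquare U) :
    ∃ z ∈ U ⊓ LinearMap.ker g, ∃ τ ∈ wedgeSquare (U ⊓ LinearMap.ker g),
      x = ι ℂ e * ι ℂ z + τ := by
  induction hx using Submodule.span_induction with
  | mem x hx =>
    obtain ⟨u, v, hu, hv, rfl⟩ := hx
    obtain ⟨u', hu'⟩ : ∃ u', u' = u - g u • e := ⟨_, rfl⟩
    obtain ⟨v', hv'⟩ : ∃ v', v' = v - g v • e := ⟨_, rfl⟩
    have hu'm : u' ∈ U ⊓ LinearMap.ker g := by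
      rw [hu']
      refine ⟨Submodule.sub_mem _ hu (Submodule.smul_mem _ _ he), ?_⟩
      simp [hge]
    have hv'm : v' ∈ U ⊓ LinearMap.ker g := by
      rw [hv']
      refine ⟨Submodule.sub_mem _ hv (Submodule.smul_mem _ _ he), ?_⟩
      simp [hge]
    refine ⟨g u • v' - g v • u', Submodule.sub_mem _ (Submodule.smul_mem _ _ hv'm)
        (Submodule.smul_mem _ _ hu'm), ι ℂ u' * ι ℂ v', sq_mem hu'm hv'm, ?_⟩
    have hu2 : ι ℂ u = ι ℂ u' + g u • ι ℂ e := by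
      rw [hu', map_sub, map_smul]; abel
    have hv2 : ι ℂ v = ι ℂ v' + g v • ι ℂ e := by
      rw [hv', map_sub, map_smul]; abel
    have hsub : ι ℂ (g u • v' - g v • u') = g u • ι ℂ v' - g v • ι ℂ u' := by
      rw [map_sub, map_smul, map_smul]
    rw [hu2, hv2, hsub]
    simp only [add_mul, mul_add, mul_sub, smul_mul_assoc, mul_smul_comm, ι_sq_zero,
      smul_zero, mul_zero, smul_smul, add_zero]
    rw [ι_anticomm u' e]
    simp only [smul_neg]
    abel
  | zero => exact ⟨0, Submodule.zero_mem _, 0, Submodule.zero_mem _, by simp⟩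
  | add x y _ _ hx hy =>
    obtain ⟨z1, hz1, τ1, hτ1, rfl⟩ := hx
    obtain ⟨z2, hz2, τ2, hτ2, rfl⟩ := hy
    exact ⟨z1 + z2, Submodule.add_mem _ hz1 hz2, τ1 + τ2, Submodule.add_mem _ hτ1 hτ2, by
      rw [map_add, mul_add]; abel⟩
  | smul a x _ hx =>
    obtain ⟨z, hz, τ, hτ, rfl⟩ := hx
    exact ⟨a • z, Submodule.smul_mem _ _ hz, a • τ, Submodule.smul_mem _ _ hτ, by
      rw [map_smul, smul_add, mul_smul_comm]⟩

/-- Cube decomposition. -/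
lemma W3 {U : Submodule ℂ V} {g : Module.Dual ℂ V} {e : V} (he : e ∈ U) (hge : g e = 1)
    {x : ExteriorAlgebra ℂ V} (hx : x ∈ wedgeCube U) :
    ∃ σ ∈ wedgeSquare (U ⊓ LinearMap.ker g), ∃ γ ∈ wedgeCube (U ⊓ LinearMap.ker g),
      x = ι ℂ e * σ + γ := by
  induction hx using Submodule.span_induction with
  | mem x hx =>
    obtain ⟨u, v, w, hu, hv, hw, rfl⟩ := hx
    obtain ⟨z, hz, τ, hτ, h2⟩ := W2 he hge (sq_mem hu hv)
    obtain ⟨w', hw'⟩ : ∃ w', w' = w - g w • e := ⟨_, rfl⟩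
    have hw'm : w' ∈ U ⊓ LinearMap.ker g := by
      rw [hw']
      refine ⟨Submodule.sub_mem _ hw (Submodule.smul_mem _ _ he), ?_⟩
      simp [hge]
    have hw2 : ι ℂ w = ι ℂ w' + g w • ι ℂ e := by
      rw [hw', map_sub, map_smul]; abel
    have e1 : ι ℂ e * ι ℂ z * ι ℂ w = ι ℂ e * (ι ℂ z * ι ℂ w') := by
      rw [hw2, mul_add, mul_smul_comm, tz1 e z, smul_zero, add_zero, mul_assoc]
    have e2 : τ * ι ℂ w = ι ℂ e * (g w • τ) + τ * ι ℂ w' := by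
      rw [hw2, mul_add, mul_smul_comm, comm2 hτ e, ← mul_smul_comm]
      abel
    refine ⟨ι ℂ z * ι ℂ w' + g w • τ,
      Submodule.add_mem _ (sq_mem hz hw'm) (Submodule.smul_mem _ _ hτ),
      τ * ι ℂ w', sq_mul_mem hτ hw'm, ?_⟩
    rw [h2, add_mul, e1, e2, mul_add]
    abel
  | zero => exact ⟨0, Submodule.zero_mem _, 0, Submodule.zero_mem _, by simp⟩
  | add x y _ _ hx hy =>
    obtain ⟨σ1, hσ1, γ1, hγ1, rfl⟩ := hx
    obtain ⟨σ2, hσ2, γ2, hγ2, rfl⟩ := hy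
    exact ⟨σ1 + σ2, Submodule.add_mem _ hσ1 hσ2, γ1 + γ2, Submodule.add_mem _ hγ1 hγ2, by
      rw [mul_add]; abel⟩
  | smul a x _ hx =>
    obtain ⟨σ, hσ, γ, hγ, rfl⟩ := hx
    exact ⟨a • σ, Submodule.smul_mem _ _ hσ, a • γ, Submodule.smul_mem _ _ hγ, by
      rw [smul_add, mul_smul_comm]⟩

/-- If `x ∈ ⋀³U` and `g⌟x = 0` with `g e = 1` on some `e ∈ U`, then `x ∈ ⋀³(U ∩ ker g)`. -/
lemma cube_reduce {U : Submodule ℂ V} {g : Module.Dual ℂ V} {e : V} (he : e ∈ U)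
    (hge : g e = 1) {x : ExteriorAlgebra ℂ V} (hx : x ∈ wedgeCube U) (hc : ctr g x = 0) :
    x ∈ wedgeCube (U ⊓ LinearMap.ker g) := by
  obtain ⟨σ, hσ, γ, hγ, rfl⟩ := W3 he hge hx
  have hgU' : ∀ u ∈ U ⊓ LinearMap.ker g, g u = 0 := fun u hu => hu.2
  have hs : ctr g (ι ℂ e * σ + γ) = σ := by
    rw [map_add, ctr_ι_mul, ctr_sq_zero hgU' hσ, ctr_cube_zero hgU' hγ, hge, one_smul,
      mul_zero, sub_zero, add_zero]
  rw [hc] at hs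
  rw [← hs, mul_zero, zero_add]
  exact hγ

/-- Constructive decomposability of the 4-variable normal form. -/
lemma DEC (w : Fin 4 → V) (a b c d : ℂ) :
    ∃ u v z : V,
      a • (ι ℂ (w 1) * ι ℂ (w 2) * ι ℂ (w 3)) + b • (ι ℂ (w 0) * ι ℂ (w 2) * ι ℂ (w 3)) +
        c • (ι ℂ (w 0) * ι ℂ (w 1) * ι ℂ (w 3)) + d • (ι ℂ (w 0) * ι ℂ (w 1) * ι ℂ (w 2)) =
      ι ℂ u * ι ℂ v * ι ℂ z := by
  have h032 : ι ℂ (w 0) * ι ℂ (w 3) * ι ℂ (w 2) = -(ι ℂ (w 0) * ι ℂ (w 2) * ι ℂ (w 3)) :=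
    swR _ _ _
  have h312 : ι ℂ (w 3) * ι ℂ (w 1) * ι ℂ (w 2) = ι ℂ (w 1) * ι ℂ (w 2) * ι ℂ (w 3) := by
    rw [swL (w 3) (w 1) (w 2), swR (w 1) (w 3) (w 2), neg_neg]
  have h021 : ι ℂ (w 0) * ι ℂ (w 2) * ι ℂ (w 1) = -(ι ℂ (w 0) * ι ℂ (w 1) * ι ℂ (w 2)) :=
    swR _ _ _
  have h201 : ι ℂ (w 2) * ι ℂ (w 0) * ι ℂ (w 1) = ι ℂ (w 0) * ι ℂ (w 1) * ι ℂ (w 2) := by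
    rw [swL (w 2) (w 0) (w 1), swR (w 0) (w 2) (w 1), neg_neg]
  have h213 : ι ℂ (w 2) * ι ℂ (w 1) * ι ℂ (w 3) = -(ι ℂ (w 1) * ι ℂ (w 2) * ι ℂ (w 3)) :=
    swL _ _ _
  by_cases hd : d ≠ 0
  · refine ⟨d • w 0 + a • w 3, w 1 - (b/d) • w 3, w 2 + (c/d) • w 3, ?_⟩
    rw [map_add, map_sub, map_add, map_smul, map_smul, map_smul, map_smul]
    simp only [add_mul, sub_mul, mul_add, mul_sub, smul_mul_assoc, mul_smul_comm, smul_smul,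
      tz1, tz2, tz3, smul_zero, mul_zero, zero_mul, sub_zero, add_zero, zero_add, smul_neg,
      neg_smul, h032, h312]
    match_scalars <;> field_simp
  by_cases hc : c ≠ 0
  · refine ⟨c • w 0 - a • w 2, w 1 + (b/c) • w 2, w 3, ?_⟩
    rw [map_sub, map_add, map_smul, map_smul, map_smul]
    simp only [add_mul, sub_mul, mul_add, mul_sub, smul_mul_assoc, mul_smul_comm, smul_smul,
      tz1, tz2, tz3, smul_zero, mul_zero, zero_mul, sub_zero, add_zero, zero_add, smul_neg,
      neg_smul, h021, h201, h213]
    push_neg at hd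
    rw [hd]
    match_scalars <;> field_simp
  by_cases hb : b ≠ 0
  · refine ⟨b • w 0 + a • w 1, w 2, w 3, ?_⟩
    push_neg at hd hc
    rw [hd, hc, map_add, map_smul, map_smul]
    simp only [add_mul, smul_mul_assoc]
    match_scalars <;> field_simp
  · refine ⟨a • w 1, w 2, w 3, ?_⟩
    push_neg at hd hc hb
    rw [hd, hc, hb, map_smul]
    simp only [smul_mul_assoc]
    match_scalars <;> field_simp



set_option maxHeartbeats 2000000 in
/-- Any cube over a space spanned by 4 vectors lies in the span of the 4 normal products. -/
lemma NF4 (w : Fin 4 → V) {x : ExteriorAlgebra ℂ V}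
    (hx : x ∈ wedgeCube (Submodule.span ℂ (Set.range w))) :
    ∃ a b c d : ℂ,
      x = a • (ι ℂ (w 1) * ι ℂ (w 2) * ι ℂ (w 3)) + b • (ι ℂ (w 0) * ι ℂ (w 2) * ι ℂ (w 3)) +
        c • (ι ℂ (w 0) * ι ℂ (w 1) * ι ℂ (w 3)) + d • (ι ℂ (w 0) * ι ℂ (w 1) * ι ℂ (w 2)) := by
  set S : Set (ExteriorAlgebra ℂ V) :=
    {ι ℂ (w 1) * ι ℂ (w 2) * ι ℂ (w 3), ι ℂ (w 0) * ι ℂ (w 2) * ι ℂ (w 3),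
      ι ℂ (w 0) * ι ℂ (w 1) * ι ℂ (w 3), ι ℂ (w 0) * ι ℂ (w 1) * ι ℂ (w 2)} with hS
  have mA : ι ℂ (w 1) * ι ℂ (w 2) * ι ℂ (w 3) ∈ Submodule.span ℂ S :=
    Submodule.subset_span (by simp [hS])
  have mB : ι ℂ (w 0) * ι ℂ (w 2) * ι ℂ (w 3) ∈ Submodule.span ℂ S :=
    Submodule.subset_span (by simp [hS])
  have mC : ι ℂ (w 0) * ι ℂ (w 1) * ι ℂ (w 3) ∈ Submodule.span ℂ S :=
    Submodule.subset_span (by simp [hS])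
  have mD : ι ℂ (w 0) * ι ℂ (w 1) * ι ℂ (w 2) ∈ Submodule.span ℂ S :=
    Submodule.subset_span (by simp [hS])
  have stepL : ∀ {a b c : V}, ι ℂ b * ι ℂ a * ι ℂ c ∈ Submodule.span ℂ S →
      ι ℂ a * ι ℂ b * ι ℂ c ∈ Submodule.span ℂ S := by
    intro a b c h; rw [swL]; exact Submodule.neg_mem _ h
  have stepR : ∀ {a b c : V}, ι ℂ a * ι ℂ c * ι ℂ b ∈ Submodule.span ℂ S →
      ι ℂ a * ι ℂ b * ι ℂ c ∈ Submodule.span ℂ S := by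
    intro a b c h; rw [swR]; exact Submodule.neg_mem _ h
  have stepO : ∀ {a b c : V}, ι ℂ c * ι ℂ b * ι ℂ a ∈ Submodule.span ℂ S →
      ι ℂ a * ι ℂ b * ι ℂ c ∈ Submodule.span ℂ S := by
    intro a b c h; rw [swO]; exact Submodule.neg_mem _ h
  have key : x ∈ Submodule.span ℂ S := by
    refine Submodule.span_le.2 ?_ hx
    rintro y ⟨u, v, z, hu, hv, hz, rfl⟩
    clear hx
    induction hu using Submodule.span_induction with
    | zero => simp
    | add p q _ _ hp hq => rw [map_add, add_mul, add_mul]; exact Submodule.add_mem _ hp hq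
    | smul a p _ hp =>
      rw [map_smul, smul_mul_assoc, smul_mul_assoc]; exact Submodule.smul_mem _ _ hp
    | mem u hu =>
      induction hv using Submodule.span_induction with
      | zero => simp
      | add p q _ _ hp hq => rw [map_add, mul_add, add_mul]; exact Submodule.add_mem _ hp hq
      | smul a p _ hp =>
        rw [map_smul, mul_smul_comm, smul_mul_assoc]; exact Submodule.smul_mem _ _ hp
      | mem v hv =>
        induction hz using Submodule.span_induction with
        | zero => simp
        | add p q _ _ hp hq => rw [map_add, mul_add]; exact Submodule.add_mem _ hp hq
        | smul a p _ hp => rw [map_smul, mul_smul_comm]; exact Submodule.smul_mem _ _ hp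
        | mem z hz =>
          obtain ⟨i, rfl⟩ := hu
          obtain ⟨j, rfl⟩ := hv
          obtain ⟨k, rfl⟩ := hz
          fin_cases i <;> fin_cases j <;> fin_cases k <;>
          first
          | (simp only [tz1, tz2, tz3]; exact Submodule.zero_mem _)
          | exact mA
          | exact mB
          | exact mC
          | exact mD
          | exact stepR mA
          | exact stepR mB
          | exact stepR mC
          | exact stepR mD
          | exact stepL mA
          | exact stepL mB
          | exact stepL mC
          | exact stepL mD
          | exact stepO mA
          | exact stepO mB
          | exact stepO mC
          | exact stepO mD
          | exact stepO (stepR mA)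
          | exact stepO (stepR mB)
          | exact stepO (stepR mC)
          | exact stepO (stepR mD)
          | exact stepL (stepR mA)
          | exact stepL (stepR mB)
          | exact stepL (stepR mC)
          | exact stepL (stepR mD)
  rw [hS] at key
  obtain ⟨a, y, hy, rfl⟩ := Submodule.mem_span_insert.mp key
  obtain ⟨b, z, hz, rfl⟩ := Submodule.mem_span_insert.mp hy
  obtain ⟨c, u, hu, rfl⟩ := Submodule.mem_span_insert.mp hz
  obtain ⟨d, rfl⟩ := Submodule.mem_span_singleton.mp hu
  exact ⟨a, b, c, d, by abel⟩

/-- Every degree-3 element over a subspace of dimension at most 4 is decomposable. -/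
lemma D4 [FiniteDimensional ℂ V] {B : Submodule ℂ V} (hB : Module.finrank ℂ B ≤ 4)
    {x : ExteriorAlgebra ℂ V} (hx : x ∈ wedgeCube B) :
    ∃ u v z : V, x = ι ℂ u * ι ℂ v * ι ℂ z := by
  set n := Module.finrank ℂ B with hn
  let b := Module.finBasis ℂ B
  let w : Fin 4 → V := fun i => if h : (i : ℕ) < n then (b ⟨i, h⟩ : V) else 0
  have hBw : B ≤ Submodule.span ℂ (Set.range w) := by
    intro y hy
    have hy1 : (⟨y, hy⟩ : B) ∈ Submodule.span ℂ (Set.range b) := by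
      rw [b.span_eq]; trivial
    have hy2 : y ∈ Submodule.map B.subtype (Submodule.span ℂ (Set.range b)) :=
      ⟨⟨y, hy⟩, hy1, rfl⟩
    rw [Submodule.map_span] at hy2
    refine Submodule.span_le.2 ?_ hy2
    rintro _ ⟨_, ⟨j, rfl⟩, rfl⟩
    apply Submodule.subset_span
    refine ⟨⟨(j : ℕ), lt_of_lt_of_le j.2 hB⟩, ?_⟩
    have hj : ((⟨(j : ℕ), lt_of_lt_of_le j.2 hB⟩ : Fin 4) : ℕ) < n := j.2
    simp only [w, dif_pos hj]
    exact congrArg _ (congrArg b (Fin.ext rfl))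
  obtain ⟨a, b', c, d, hxe⟩ := NF4 w (wedgeCube_mono hBw hx)
  obtain ⟨u, v, z, he⟩ := DEC w a b' c d
  exact ⟨u, v, z, hxe.trans he⟩

lemma top3 {x : ExteriorAlgebra ℂ V} (hx : x ∈ ⋀[ℂ]^3 V) : x ∈ wedgeCube (⊤ : Submodule ℂ V) := by
  rw [← ιMulti_span_fixedDegree] at hx
  refine Submodule.span_le.2 ?_ hx
  rintro _ ⟨v, rfl⟩
  have : ιMulti ℂ 3 v = ι ℂ (v 0) * ι ℂ (v 1) * ι ℂ (v 2) := by
    rw [ιMulti_apply]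
    simp [List.ofFn_succ, mul_assoc]
  rw [this]
  exact Submodule.subset_span ⟨v 0, v 1, v 2, trivial, trivial, trivial, rfl⟩

lemma exists_dual_one [FiniteDimensional ℂ V] {e : V} (he : e ≠ 0) :
    ∃ g : Module.Dual ℂ V, g e = 1 := by
  have := (not_iff_not.2 (Module.forall_dual_apply_eq_zero_iff ℂ e)).2 he
  push_neg at this
  obtain ⟨g, hg⟩ := this
  exact ⟨(g e)⁻¹ • g, by simp [inv_mul_cancel₀ hg]⟩

end Auxiliary

/-- for `ω ∈ O₅` with kernel line spanned by `α` and associated hyperplane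
`A_ω = ker f` (where `f` spans the kernel of the contraction by `ω`): (i) `α ∈ A_ω`;
(ii) `A_ω` is the smallest subspace `W` with `ω` in the image of `⋀³W`; (iii) `ω = α∧σ`
for some non-decomposable `σ ∈ ⋀²A_ω`. -/
theorem stmt6 {V : Type*} [AddCommGroup V] [Module ℂ V] [FiniteDimensional ℂ V]
    (hV : Module.finrank ℂ V = 6)
    (ω : ExteriorAlgebra ℂ V) (hω : InO5 ω)
    (α : V) (hα : α ≠ 0)
    (hker : ∀ v : V, ι ℂ v * ω = 0 ↔ v ∈ Submodule.span ℂ {α})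
    (K : Module.Dual ℂ V →ₗ[ℂ] ExteriorAlgebra ℂ V →ₗ[ℂ] ExteriorAlgebra ℂ V)
    (hK : ∀ (f : Module.Dual ℂ V) (u v w : V),
      K f (ι ℂ u * ι ℂ v * ι ℂ w) =
        f u • (ι ℂ v * ι ℂ w) - f v • (ι ℂ u * ι ℂ w) + f w • (ι ℂ u * ι ℂ v))
    (f : Module.Dual ℂ V) (hf : f ≠ 0) (hfω : K f ω = 0) :
    α ∈ LinearMap.ker f ∧
    (ω ∈ wedgeCube (LinearMap.ker f) ∧
      ∀ W : Submodule ℂ V, ω ∈ wedgeCube W → LinearMap.ker f ≤ W) ∧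
    (∃ σ ∈ wedgeSquare (LinearMap.ker f),
      (¬ ∃ u v : V, σ = ι ℂ u * ι ℂ v) ∧ ω = ι ℂ α * σ) := by
  obtain ⟨hω3, hωnd, -⟩ := hω
  -- ω is nonzero
  have hω0 : ω ≠ 0 := by
    intro h
    exact hωnd ⟨0, 0, 0, by simp [h]⟩
  -- K f agrees with the contraction on degree-3 elements
  have hKgen : ∀ x ∈ Submodule.span ℂ (Set.range (ιMulti ℂ 3 (M := V))),
      K f x = ctr f x := by
    intro x hsp
    induction hsp using Submodule.span_induction with
    | mem x hx =>
      obtain ⟨v, rfl⟩ := hx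
      have h3 : ιMulti ℂ 3 v = ι ℂ (v 0) * ι ℂ (v 1) * ι ℂ (v 2) := by
        rw [ιMulti_apply]
        simp [List.ofFn_succ, mul_assoc]
      rw [h3, hK, ctr_triple]
    | zero => simp
    | add x y _ _ hx hy => rw [map_add, map_add, hx, hy]
    | smul a x _ hx => rw [map_smul, map_smul, hx]
  have hKctr : K f ω = ctr f ω := hKgen ω (by rwa [ιMulti_span_fixedDegree])
  have hctrf : ctr f ω = 0 := by rw [← hKctr, hfω]
  -- a vector on which f is 1
  obtain ⟨v₀, hv₀⟩ := DFunLike.ne_iff.mp hf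
  have hv₀' : f v₀ ≠ 0 := by simpa using hv₀
  have hfe : f ((f v₀)⁻¹ • v₀) = 1 := by
    simp [inv_mul_cancel₀ hv₀']
  -- ω lies in ⋀³(ker f)
  have hωA : ω ∈ wedgeCube (LinearMap.ker f) := by
    have h1 : ω ∈ wedgeCube ((⊤ : Submodule ℂ V) ⊓ (LinearMap.ker f)) :=
      cube_reduce (Submodule.mem_top) hfe (top3 hω3) hctrf
    exact wedgeCube_mono inf_le_right h1
  -- (i)
  have hαω : ι ℂ α * ω = 0 := (hker α).2 (Submodule.mem_span_singleton_self α)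
  have hfα : f α = 0 := by
    have h0 : ctr f (ι ℂ α * ω) = f α • ω - ι ℂ α * ctr f ω := ctr_ι_mul f α ω
    rw [hαω, map_zero, hctrf, mul_zero, sub_zero] at h0
    rcases smul_eq_zero.mp h0.symm with h | h
    · exact h
    · exact absurd h hω0
  have hαA : α ∈ (LinearMap.ker f) := LinearMap.mem_ker.mpr hfα
  -- (iii)
  obtain ⟨g, hg⟩ := exists_dual_one hα
  have hσ := ctr_cube_mem g hωA
  have hωσ : ω = ι ℂ α * ctr g ω := by
    have h0 := ctr_ι_mul g α ω
    rw [hαω, map_zero, hg, one_smul] at h0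
    exact sub_eq_zero.mp h0.symm
  have hnd : ¬ ∃ u v : V, ctr g ω = ι ℂ u * ι ℂ v := by
    rintro ⟨u, v, huv⟩
    exact hωnd ⟨α, u, v, by rw [hωσ, huv, mul_assoc]⟩
  -- (ii) minimality
  have hmin : ∀ W : Submodule ℂ V, ω ∈ wedgeCube W → (LinearMap.ker f) ≤ W := by
    intro W hW
    rw [← Subspace.dualAnnihilator_le_dualAnnihilator_iff]
    intro h hh
    rw [Submodule.mem_dualAnnihilator] at hh ⊢
    by_contra hc
    push_neg at hc
    obtain ⟨v, hvA, hvh⟩ := hc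
    have hctrh : ctr h ω = 0 := ctr_cube_zero (fun u hu => hh u hu) hW
    have heA : (h v)⁻¹ • v ∈ (LinearMap.ker f) := Submodule.smul_mem _ _ hvA
    have hhe : h ((h v)⁻¹ • v) = 1 := by simp [inv_mul_cancel₀ hvh]
    have hB : ω ∈ wedgeCube ((LinearMap.ker f) ⊓ LinearMap.ker h) := cube_reduce heA hhe hωA hctrh
    have hr1 : Module.finrank ℂ (LinearMap.range f) = 1 := by
      have hle : Module.finrank ℂ (LinearMap.range f) ≤ 1 := by
        simpa using Submodule.finrank_le (LinearMap.range f)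
      have hne : LinearMap.range f ≠ ⊥ := fun h0 => hf (LinearMap.range_eq_bot.mp h0)
      have hnz : Module.finrank ℂ (LinearMap.range f) ≠ 0 :=
        fun h0 => hne (Submodule.finrank_eq_zero.mp h0)
      omega
    have hA5 : Module.finrank ℂ (LinearMap.ker f) = 5 := by
      have hrn := LinearMap.finrank_range_add_finrank_ker f
      rw [hV, hr1] at hrn
      omega
    have hlt : (LinearMap.ker f) ⊓ LinearMap.ker h < (LinearMap.ker f) := by
      refine lt_of_le_of_ne inf_le_left fun hEq => ?_
      have hm : (h v)⁻¹ • v ∈ (LinearMap.ker f) ⊓ LinearMap.ker h := by rw [hEq]; exact heA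
      have h0 : (1 : ℂ) = 0 := by rw [← hhe]; exact hm.2
      exact one_ne_zero h0
    have hle4 : Module.finrank ℂ ((LinearMap.ker f) ⊓ LinearMap.ker h : Submodule ℂ V) ≤ 4 := by
      have hlt5 := Submodule.finrank_lt_finrank_of_lt hlt
      omega
    obtain ⟨u, v', z, huvz⟩ := D4 hle4 hB
    exact hωnd ⟨u, v', z, huvz⟩
  exact ⟨hαA, ⟨hωA, hmin⟩, ⟨ctr g ω, hσ, hnd, hωσ⟩⟩
end
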